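/- arXiv:1209.2131 — 8 statements merged into one kernel-verified Lean document; each statement's English description precedes it below -/
import Mathlib

section
/- In the star network setting, the quadratic-rule price of buyer zero increases at rate at most one in buyer zero's bid. Precisely: the function θ ↦ p_{0,θ} on [0,∞) is piecewise linear (there exist finitely many points 0 = t_0 < t_1 < ⋯ < t_m such that θ ↦ p_{0,θ} is affine on each interval [t_i, t_{i+1}] and on [t_m, ∞)), and for all real numbers θ, θ' with 0 ≤ θ ≤ θ' one has p_{0,θ'} − p_{0,θ} ≤ θ' − θ. -/
/-- The star network setting of Abhishek–Hajek. -/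
structure StarSetting where
  /-- number of arms -/
  J : ℕ
  hJ : 0 < J
  /-- number of leaf items on arm `j` -/
  n : Fin J → ℕ
  hn : ∀ j, 0 < n j
  /-- winning single-item bids -/
  b : (j : Fin J) → Fin (n j) → ℝ
  /-- losing single-item bids -/
  bl : (j : Fin J) → Fin (n j) → ℝ
  /-- losing single-item bid for item zero -/
  bl0 : ℝ
  /-- package bids -/
  C : Fin J → ℝ
  h_bid : ∀ j k, bl j k ≤ b j k
  h_pos : ∀ j, ∃ k, bl j k < b j k

namespace StarSetting

/-- Index of items (= winning buyers): `none` is item zero, `some ⟨j,k⟩` is item `(j,k)`. -/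
abbrev Idx (S : StarSetting) := Option ((j : Fin S.J) × Fin (S.n j))

variable (S : StarSetting)

noncomputable def Δ (j : Fin S.J) (k : Fin (S.n j)) : ℝ := S.b j k - S.bl j k

noncomputable def Δmax (j : Fin S.J) : ℝ :=
  Finset.univ.sup' ⟨⟨0, S.hn j⟩, Finset.mem_univ _⟩ (S.Δ j)

noncomputable def v0 : ℝ :=
  max S.bl0 (Finset.univ.sup' ⟨⟨0, S.hJ⟩, Finset.mem_univ _⟩
    fun j => S.C j - ∑ k, S.b j k)

noncomputable def η (j : Fin S.J) : ℝ := S.v0 + (∑ k, S.b j k) - S.C j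

/-- The Vikrey price vector `v_θ`. -/
noncomputable def vick (θ : ℝ) : EuclideanSpace ℝ S.Idx :=
  WithLp.toLp 2 fun i => Option.elim i S.v0 fun jk => max (S.b jk.1 jk.2 - S.η jk.1 - θ) (S.bl jk.1 jk.2)

/-- The core region `K_θ`. -/
def coreK (θ : ℝ) : Set (EuclideanSpace ℝ S.Idx) :=
  { p | (∀ j, S.C j ≤ p none + ∑ k, p (some ⟨j, k⟩)) ∧
        (∀ j k, S.bl j k ≤ p (some ⟨j, k⟩) ∧ p (some ⟨j, k⟩) ≤ S.b j k) ∧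
        S.v0 ≤ p none ∧ p none ≤ S.v0 + θ }

/-- The expanded core region (IR constraint of buyer zero dropped). -/
def expandedK : Set (EuclideanSpace ℝ S.Idx) :=
  { p | (∀ j, S.C j ≤ p none + ∑ k, p (some ⟨j, k⟩)) ∧
        (∀ j k, S.bl j k ≤ p (some ⟨j, k⟩) ∧ p (some ⟨j, k⟩) ≤ S.b j k) ∧
        S.v0 ≤ p none }

/-- The KKT conditions at `θ` for the projection onto the expanded core. -/
def KKT (θ : ℝ) (p : EuclideanSpace ℝ S.Idx) (lam : Fin S.J → ℝ) : Prop :=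
  (∀ j, 0 ≤ lam j) ∧
  p none = S.v0 + ∑ j, lam j ∧
  (∀ j k, p (some ⟨j, k⟩) = min (S.vick θ (some ⟨j, k⟩) + lam j) (S.b j k)) ∧
  (∀ j, ∑ k, max (min (S.η j + θ) (S.Δ j k) - lam j) 0 ≤ (∑ i, lam i) + S.η j) ∧
  (∀ j, 0 < lam j → (∑ i, lam i) + S.η j = ∑ k, max (min (S.η j + θ) (S.Δ j k) - lam j) 0)

/-- The seller's revenue for a winner price vector. -/
noncomputable def revenue (p : EuclideanSpace ℝ S.Idx) : ℝ :=
  p none + ∑ j, ∑ k, p (some ⟨j, k⟩)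

/-- The minimum revenue core at `θ`. -/
def MRC (θ : ℝ) : Set (EuclideanSpace ℝ S.Idx) :=
  { p | p ∈ S.coreK θ ∧ ∀ q ∈ S.coreK θ, S.revenue p ≤ S.revenue q }

end StarSetting

/-- `q` is a point of `A` nearest to `v` (Euclidean projection of `v` onto `A`). -/
def IsProjOn {E : Type*} [NormedAddCommGroup E] (A : Set E) (v q : E) : Prop :=
  q ∈ A ∧ ∀ r ∈ A, dist v q ≤ dist v r

/-- `f` is piecewise linear on `[0, ∞)`: there are finitely many breakpoints
`0 = t 0 < t 1 < ⋯ < t m` such that `f` is affine on each `[t i, t (i+1)]` and on `[t m, ∞)`. -/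
def PiecewiseLinearOnIci (f : ℝ → ℝ) : Prop :=
  ∃ m : ℕ, ∃ t : Fin (m + 1) → ℝ, t 0 = 0 ∧ StrictMono t ∧
    (∀ i : Fin m, ∃ a c : ℝ, ∀ x ∈ Set.Icc (t i.castSucc) (t i.succ), f x = a * x + c) ∧
    (∃ a c : ℝ, ∀ x ∈ Set.Ici (t (Fin.last m)), f x = a * x + c)

/-! ### Auxiliary development -/

namespace StarProof
open StarSetting Finset

/-! #### Piecewise linear machinery -/

/-- An affine real function. -/
def IsAffine (f : ℝ → ℝ) : Prop := ∃ a c : ℝ, ∀ x, f x = a * x + c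

/-- A family of functions is pairwise comparable on a set. -/
def Comp {ι : Type*} (g : ι → ℝ → ℝ) (I : Set ℝ) : Prop :=
  ∀ i j, (∀ x ∈ I, g i x ≤ g j x) ∨ (∀ x ∈ I, g j x ≤ g i x)

lemma IsAffine.const (c : ℝ) : IsAffine (fun _ => c) := ⟨0, c, fun x => by ring⟩

lemma IsAffine.add {f g : ℝ → ℝ} (hf : IsAffine f) (hg : IsAffine g) :
    IsAffine (fun x => f x + g x) := by
  obtain ⟨a, c, hf⟩ := hf; obtain ⟨a', c', hg⟩ := hg
  exact ⟨a + a', c + c', fun x => by simp only [hf, hg]; ring⟩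

lemma IsAffine.div_const {f : ℝ → ℝ} (hf : IsAffine f) (c : ℝ) :
    IsAffine (fun x => f x / c) := by
  obtain ⟨a, d, hf⟩ := hf
  exact ⟨a / c, d / c, fun x => by simp only [hf]; ring⟩

lemma IsAffine.sum {ι : Type*} (s : Finset ι) (f : ι → ℝ → ℝ) (hf : ∀ i ∈ s, IsAffine (f i)) :
    IsAffine (fun x => ∑ i ∈ s, f i x) := by
  classical
  induction s using Finset.cons_induction with
  | empty => simpa using IsAffine.const 0
  | cons a s ha ih =>
      simp only [Finset.sum_cons]
      exact (hf a (Finset.mem_cons_self a s)).add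
        (ih (fun i hi => hf i (Finset.mem_cons_of_mem hi)))

/-- Selection lemma: `inf'` of a family, each member of which agrees with an atom on `I`,
agrees with an atom on `I`, provided the atoms are pairwise comparable on `I`. -/
lemma sel_inf' {κ ι : Type*} (s : Finset κ) (hs : s.Nonempty) (h : κ → ℝ → ℝ)
    (g : ι → ℝ → ℝ) (I : Set ℝ) (hcomp : Comp g I)
    (hsel : ∀ k ∈ s, ∃ i, ∀ x ∈ I, h k x = g i x) :
    ∃ i, ∀ x ∈ I, (s.inf' hs fun k => h k x) = g i x := by
  classical
  revert hsel
  induction hs using Finset.Nonempty.cons_induction with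
  | singleton a =>
      intro hsel
      obtain ⟨i, hi⟩ := hsel a (Finset.mem_singleton_self a)
      exact ⟨i, fun x hx => by rw [Finset.inf'_singleton]; exact hi x hx⟩
  | cons a s ha hs ih =>
      intro hsel
      obtain ⟨i1, hi1⟩ := hsel a (Finset.mem_cons_self a s)
      obtain ⟨i2, hi2⟩ := ih (fun k hk => hsel k (Finset.mem_cons_of_mem hk))
      rcases hcomp i1 i2 with hc | hc
      · refine ⟨i1, fun x hx => ?_⟩
        rw [Finset.inf'_cons (H := hs), hi1 x hx, hi2 x hx]
        exact min_eq_left (hc x hx)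
      · refine ⟨i2, fun x hx => ?_⟩
        rw [Finset.inf'_cons (H := hs), hi1 x hx, hi2 x hx]
        exact min_eq_right (hc x hx)

lemma sel_sup' {κ ι : Type*} (s : Finset κ) (hs : s.Nonempty) (h : κ → ℝ → ℝ)
    (g : ι → ℝ → ℝ) (I : Set ℝ) (hcomp : Comp g I)
    (hsel : ∀ k ∈ s, ∃ i, ∀ x ∈ I, h k x = g i x) :
    ∃ i, ∀ x ∈ I, (s.sup' hs fun k => h k x) = g i x := by
  classical
  revert hsel
  induction hs using Finset.Nonempty.cons_induction with
  | singleton a =>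
      intro hsel
      obtain ⟨i, hi⟩ := hsel a (Finset.mem_singleton_self a)
      exact ⟨i, fun x hx => by rw [Finset.sup'_singleton]; exact hi x hx⟩
  | cons a s ha hs ih =>
      intro hsel
      obtain ⟨i1, hi1⟩ := hsel a (Finset.mem_cons_self a s)
      obtain ⟨i2, hi2⟩ := ih (fun k hk => hsel k (Finset.mem_cons_of_mem hk))
      rcases hcomp i1 i2 with hc | hc
      · refine ⟨i2, fun x hx => ?_⟩
        rw [Finset.sup'_cons (H := hs), hi1 x hx, hi2 x hx]
        exact max_eq_right (hc x hx)
      · refine ⟨i1, fun x hx => ?_⟩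
        rw [Finset.sup'_cons (H := hs), hi1 x hx, hi2 x hx]
        exact max_eq_left (hc x hx)

/-- Main piecewise-linearity criterion: if on every set on which the (finitely many, affine)
atoms are pairwise comparable `F` agrees with an atom, then `F` is piecewise linear. -/
lemma main_PL {ι : Type*} [Fintype ι] [Nonempty ι] (g : ι → ℝ → ℝ)
    (hg : ∀ i, IsAffine (g i)) (F : ℝ → ℝ)
    (hf : ∀ I : Set ℝ, Comp g I → ∃ i, ∀ x ∈ I, F x = g i x) :
    PiecewiseLinearOnIci F := by
  classical
  choose a c hac using hg
  set X : Finset ℝ := insert 0 ((((Finset.univ : Finset (ι × ι)).image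
    (fun q => (c q.2 - c q.1) / (a q.1 - a q.2))).filter (fun x => 0 < x))) with hX
  have h0X : (0:ℝ) ∈ X := Finset.mem_insert_self 0 _
  have hXpos : ∀ z ∈ X, 0 ≤ z := by
    intro z hz
    rcases Finset.mem_insert.mp hz with h | h
    · rw [h]
    · exact le_of_lt (Finset.mem_filter.mp h).2
  have hXne : X.Nonempty := ⟨0, h0X⟩
  set m := X.card - 1 with hm
  have hcard : X.card = m + 1 := by
    have := Finset.card_pos.mpr hXne
    omega
  set e := X.orderIsoOfFin hcard with he
  set t : Fin (m+1) → ℝ := fun i => (e i : ℝ) with ht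
  have htmono : StrictMono t := by
    intro i j hij
    exact_mod_cast e.strictMono hij
  have htmem : ∀ i, t i ∈ X := fun i => (e i).2
  have hsurj : ∀ z ∈ X, ∃ l, t l = z := by
    intro z hz
    refine ⟨e.symm ⟨z, hz⟩, ?_⟩
    rw [ht]
    simp
  have ht0 : t 0 = 0 := by
    obtain ⟨l, hl⟩ := hsurj 0 h0X
    have h1 : t 0 ≤ t l := htmono.monotone (Fin.zero_le l)
    have h2 : 0 ≤ t 0 := hXpos _ (htmem 0)
    rw [hl] at h1
    linarith
  -- comparability on crossing-free intervals
  have hcross : ∀ (i j : ι), a i ≠ a j → (c j - c i) / (a i - a j) ∈ X ∨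
      ¬ (0 < (c j - c i) / (a i - a j)) := by
    intro i j hij
    by_cases hpos : 0 < (c j - c i) / (a i - a j)
    · left
      exact Finset.mem_insert_of_mem (Finset.mem_filter.mpr
        ⟨Finset.mem_image.mpr ⟨(i,j), Finset.mem_univ _, rfl⟩, hpos⟩)
    · right; exact hpos
  have hzval : ∀ (i j : ι), a i ≠ a j → ∀ x,
      g i x - g j x = (a i - a j) * (x - (c j - c i) / (a i - a j)) := by
    intro i j hij x
    rw [hac, hac]
    have hne : a i - a j ≠ 0 := sub_ne_zero.mpr hij
    field_simp
    ring
  have hcomp_gen : ∀ (I : Set ℝ) (u : ℝ), 0 ≤ u → (∀ x ∈ I, u ≤ x) →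
      (∀ z ∈ X, ∀ x ∈ I, ¬ (u < z ∧ z < x)) → Comp g I := by
    intro I u hu hlow hno i j
    by_cases hij : a i = a j
    · rcases le_total (c i) (c j) with hc | hc
      · left; intro x _; rw [hac, hac, hij]; linarith
      · right; intro x _; rw [hac, hac, hij]; linarith
    · set z := (c j - c i) / (a i - a j) with hz
      have hval := hzval i j hij
      have hzle : ∀ x ∈ I, z ≤ x ∨ x ≤ z := by
        intro x hx
        by_cases hcase : z ≤ x
        · exact Or.inl hcase
        · exact Or.inr (le_of_not_ge hcase)
      -- either z ≤ u (hence z ≤ all of I), or z is ≥ some elements: show z ∉ strict interior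
      by_cases hzu : z ≤ u
      · -- all x in I have x ≥ u ≥ z
        rcases le_total (a i) (a j) with hsign | hsign
        · left; intro x hx
          have h1 := hval x
          have h2 := hlow x hx
          nlinarith
        · right; intro x hx
          have h1 := hval x
          have h2 := hlow x hx
          nlinarith
      · -- u < z; then no x ∈ I exceeds z
        push_neg at hzu
        have hzpos : 0 < z := lt_of_le_of_lt hu hzu
        have hzX : z ∈ X := by
          rcases hcross i j hij with h | h
          · exact h
          · exact absurd hzpos h
        have hxlez : ∀ x ∈ I, x ≤ z := by
          intro x hx
          by_contra hgt
          push_neg at hgt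
          exact hno z hzX x hx ⟨hzu, hgt⟩
        rcases le_total (a i) (a j) with hsign | hsign
        · right; intro x hx
          have h1 := hval x
          have h2 := hxlez x hx
          nlinarith
        · left; intro x hx
          have h1 := hval x
          have h2 := hxlez x hx
          nlinarith
  refine ⟨m, t, ht0, htmono, ?_, ?_⟩
  · intro i
    have hcomp : Comp g (Set.Icc (t i.castSucc) (t i.succ)) := by
      refine hcomp_gen _ (t i.castSucc) ?_ (fun x hx => hx.1) ?_
      · rw [← ht0]; exact htmono.monotone (Fin.zero_le _)
      · intro z hz x hx ⟨h1, h2⟩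
        obtain ⟨l, hl⟩ := hsurj z hz
        rw [← hl] at h1 h2
        have hl1 : i.castSucc < l := htmono.lt_iff_lt.mp h1
        have hl2 : t l < t i.succ := lt_of_lt_of_le h2 hx.2
        have hl2' : l < i.succ := htmono.lt_iff_lt.mp hl2
        have e1 : (i : ℕ) < (l : ℕ) := by
          have := hl1
          rw [Fin.lt_def] at this
          simpa using this
        have e2 : (l : ℕ) < (i : ℕ) + 1 := by
          have := hl2'
          rw [Fin.lt_def] at this
          simpa using this
        omega
    obtain ⟨idx, hidx⟩ := hf _ hcomp
    exact ⟨a idx, c idx, fun x hx => by rw [hidx x hx, hac]⟩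
  · have hcomp : Comp g (Set.Ici (t (Fin.last m))) := by
      refine hcomp_gen _ (t (Fin.last m)) ?_ (fun x hx => hx) ?_
      · rw [← ht0]; exact htmono.monotone (Fin.zero_le _)
      · intro z hz x hx ⟨h1, h2⟩
        obtain ⟨l, hl⟩ := hsurj z hz
        rw [← hl] at h1
        have : t l ≤ t (Fin.last m) := htmono.monotone (Fin.le_last l)
        linarith
    obtain ⟨idx, hidx⟩ := hf _ hcomp
    exact ⟨a idx, c idx, fun x hx => by rw [hidx x hx, hac]⟩

lemma PL_congr (F f : ℝ → ℝ) (h : ∀ x, 0 ≤ x → f x = F x)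
    (hF : PiecewiseLinearOnIci F) : PiecewiseLinearOnIci f := by
  obtain ⟨m, t, ht0, hmono, hint, hlast⟩ := hF
  refine ⟨m, t, ht0, hmono, ?_, ?_⟩
  · intro i
    obtain ⟨a, c, hac⟩ := hint i
    refine ⟨a, c, fun x hx => ?_⟩
    rw [h x (by
      calc (0:ℝ) = t 0 := ht0.symm
        _ ≤ t i.castSucc := hmono.monotone (Fin.zero_le _)
        _ ≤ x := hx.1), hac x hx]
  · obtain ⟨a, c, hac⟩ := hlast
    refine ⟨a, c, fun x hx => ?_⟩
    rw [h x (by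
      calc (0:ℝ) = t 0 := ht0.symm
        _ ≤ t (Fin.last m) := hmono.monotone (Fin.zero_le _)
        _ ≤ x := hx), hac x hx]

lemma PL_const_add (C : ℝ) (F : ℝ → ℝ) (hF : PiecewiseLinearOnIci F) :
    PiecewiseLinearOnIci (fun x => C + F x) := by
  obtain ⟨m, t, ht0, hmono, hint, hlast⟩ := hF
  refine ⟨m, t, ht0, hmono, ?_, ?_⟩
  · intro i
    obtain ⟨a, c, hac⟩ := hint i
    exact ⟨a, C + c, fun x hx => by simp only []; rw [hac x hx]; ring⟩
  · obtain ⟨a, c, hac⟩ := hlast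
    exact ⟨a, C + c, fun x hx => by simp only []; rw [hac x hx]; ring⟩

/-! #### The explicit solution -/

variable (S : StarSetting)

/-- capped increments -/
noncomputable def dd (θ : ℝ) (j : Fin S.J) (k : Fin (S.n j)) : ℝ := min (S.η j + θ) (S.Δ j k)

/-- nonempty subsets of the items of arm `j` -/
def TT (j : Fin S.J) : Finset (Finset (Fin (S.n j))) :=
  Finset.univ.powerset.filter Finset.Nonempty

lemma TT_nonempty (j : Fin S.J) : (TT S j).Nonempty := by
  refine ⟨{⟨0, S.hn j⟩}, ?_⟩
  simp [TT, Finset.filter, Finset.singleton_nonempty]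

lemma mem_TT {j : Fin S.J} {T : Finset (Fin (S.n j))} (hT : T.Nonempty) : T ∈ TT S j := by
  simp [TT, hT]

noncomputable def armAtom (s θ : ℝ) (j : Fin S.J) (T : Finset (Fin (S.n j))) : ℝ :=
  ((∑ k ∈ T, dd S θ j k) - S.η j - s) / T.card

/-- the water level (Lagrange multiplier) of arm `j` -/
noncomputable def μa (s θ : ℝ) (j : Fin S.J) : ℝ :=
  max 0 ((TT S j).sup' (TT_nonempty S j) (armAtom S s θ j))

noncomputable def Φ (s θ : ℝ) : ℝ := ∑ j, μa S s θ j

abbrev Gam := (j : Fin S.J) → Finset (Fin (S.n j))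
abbrev Sig := (j : Fin S.J) → Fin (S.n j) → Bool

noncomputable def σstar (θ : ℝ) : Sig S := fun j k => decide (S.η j + θ ≤ S.Δ j k)

noncomputable def rr (γ : Gam S) (j : Fin S.J) : ℝ :=
  if γ j = ∅ then 0 else 1 / ((γ j).card : ℝ)

noncomputable def NN (γ : Gam S) (σ : Sig S) (θ : ℝ) (j : Fin S.J) : ℝ :=
  if γ j = ∅ then 0
  else ((∑ k ∈ γ j, (if σ j k then S.η j + θ else S.Δ j k)) - S.η j) / ((γ j).card : ℝ)

noncomputable def ζ (γ : Gam S) (σ : Sig S) (θ : ℝ) : ℝ :=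
  (∑ j, NN S γ σ θ j) / (1 + ∑ j, rr S γ j)

noncomputable def MM (θ : ℝ) : ℝ :=
  Finset.univ.sup' Finset.univ_nonempty
    (fun γ : Gam S => Finset.univ.inf' Finset.univ_nonempty (fun σ : Sig S => ζ S γ σ θ))

noncomputable def sstar (θ : ℝ) : ℝ := min θ (MM S θ)

noncomputable def Aat (s θ : ℝ) (γ : Gam S) (j : Fin S.J) : ℝ :=
  if γ j = ∅ then 0 else armAtom S s θ j (γ j)

noncomputable def pstar (θ : ℝ) : EuclideanSpace ℝ S.Idx :=
  WithLp.toLp 2 fun i => Option.elim i (S.v0 + sstar S θ)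
    fun jk => S.b jk.1 jk.2 - max (dd S θ jk.1 jk.2 - μa S (sstar S θ) θ jk.1) 0

/-! #### Basic facts -/

lemma η_nonneg (j : Fin S.J) : 0 ≤ S.η j := by
  have h : S.C j - ∑ k, S.b j k ≤ S.v0 := by
    refine le_trans ?_ (le_max_right _ _)
    exact Finset.le_sup' (fun j => S.C j - ∑ k, S.b j k) (Finset.mem_univ j)
  simp only [StarSetting.η]
  linarith

lemma Δ_nonneg (j : Fin S.J) (k : Fin (S.n j)) : 0 ≤ S.Δ j k :=
  sub_nonneg.mpr (S.h_bid j k)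

lemma dd_nonneg {θ : ℝ} (hθ : 0 ≤ θ) (j : Fin S.J) (k : Fin (S.n j)) : 0 ≤ dd S θ j k :=
  le_min (by have := η_nonneg S j; linarith) (Δ_nonneg S j k)

lemma dd_le_Δ (θ : ℝ) (j : Fin S.J) (k : Fin (S.n j)) : dd S θ j k ≤ S.Δ j k := min_le_right _ _

lemma vick_some (θ : ℝ) (j : Fin S.J) (k : Fin (S.n j)) :
    S.vick θ (some ⟨j, k⟩) = S.b j k - dd S θ j k := by
  show max (S.b j k - S.η j - θ) (S.bl j k) = S.b j k - min (S.η j + θ) (S.Δ j k)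
  rw [StarSetting.Δ]
  rcases le_total (S.η j + θ) (S.b j k - S.bl j k) with h | h
  · rw [min_eq_left h, max_eq_left (by linarith)]; ring
  · rw [min_eq_right h, max_eq_right (by linarith)]; ring

lemma C_eq (j : Fin S.J) : S.C j = S.v0 + (∑ k, S.b j k) - S.η j := by
  simp [η]

/-! #### Water level lemmas -/

lemma μa_nonneg (s θ : ℝ) (j : Fin S.J) : 0 ≤ μa S s θ j := le_max_left _ _

lemma μa_ge (s θ : ℝ) (j : Fin S.J) {T : Finset (Fin (S.n j))} (hT : T.Nonempty) :
    armAtom S s θ j T ≤ μa S s θ j :=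
  le_trans (Finset.le_sup' _ (mem_TT S hT)) (le_max_right _ _)

lemma μa_attain {s θ : ℝ} {j : Fin S.J} (h : 0 < μa S s θ j) :
    ∃ T : Finset (Fin (S.n j)), T.Nonempty ∧ μa S s θ j = armAtom S s θ j T := by
  obtain ⟨T, hT, hTe⟩ := Finset.exists_mem_eq_sup' (TT_nonempty S j) (armAtom S s θ j)
  refine ⟨T, (Finset.mem_filter.mp hT).2, ?_⟩
  have : μa S s θ j = (TT S j).sup' (TT_nonempty S j) (armAtom S s θ j) := by
    rcases max_cases (0:ℝ) ((TT S j).sup' (TT_nonempty S j) (armAtom S s θ j)) with ⟨h1, h2⟩ | ⟨h1, h2⟩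
    · rw [μa] at h ⊢; rw [h1] at h ⊢; linarith
    · rw [μa, h1]
  rw [this, hTe]

lemma sum_max_le {s θ : ℝ} (hs : 0 ≤ s) (j : Fin S.J) :
    ∑ k, max (dd S θ j k - μa S s θ j) 0 ≤ S.η j + s := by
  classical
  set lam := μa S s θ j with hlam
  set U : Finset (Fin (S.n j)) := Finset.univ.filter (fun k => lam < dd S θ j k) with hU
  have hsplit : ∑ k, max (dd S θ j k - lam) 0 = ∑ k ∈ U, (dd S θ j k - lam) := by
    rw [Finset.sum_filter]
    refine Finset.sum_congr rfl fun k _ => ?_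
    by_cases hk : lam < dd S θ j k
    · rw [if_pos hk, max_eq_left (by linarith)]
    · rw [if_neg hk, max_eq_right (by push_neg at hk; linarith)]
  rw [hsplit]
  rcases U.eq_empty_or_nonempty with hUe | hUne
  · rw [hUe, Finset.sum_empty]
    have := η_nonneg S j; linarith
  · have hcard : (0:ℝ) < U.card := by exact_mod_cast Finset.card_pos.mpr hUne
    have hle := μa_ge S s θ j hUne
    rw [armAtom, div_le_iff₀ hcard] at hle
    have : ∑ k ∈ U, (dd S θ j k - lam) = (∑ k ∈ U, dd S θ j k) - U.card * lam := by
      rw [Finset.sum_sub_distrib, Finset.sum_const, nsmul_eq_mul]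
    rw [this]
    nlinarith [hle]

lemma sum_max_eq {s θ : ℝ} (hs : 0 ≤ s) {j : Fin S.J} (h : 0 < μa S s θ j) :
    ∑ k, max (dd S θ j k - μa S s θ j) 0 = S.η j + s := by
  refine le_antisymm (sum_max_le S hs j) ?_
  obtain ⟨T, hTne, hTeq⟩ := μa_attain S h
  set lam := μa S s θ j with hlam
  have hcard : (0:ℝ) < T.card := by exact_mod_cast Finset.card_pos.mpr hTne
  have hval : ∑ k ∈ T, (dd S θ j k - lam) = S.η j + s := by
    have : lam * T.card = (∑ k ∈ T, dd S θ j k) - S.η j - s := by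
      rw [hTeq, armAtom, div_mul_cancel₀ _ (ne_of_gt hcard)]
    rw [Finset.sum_sub_distrib, Finset.sum_const, nsmul_eq_mul]
    linarith
  calc S.η j + s = ∑ k ∈ T, (dd S θ j k - lam) := hval.symm
    _ ≤ ∑ k ∈ T, max (dd S θ j k - lam) 0 := Finset.sum_le_sum fun k _ => le_max_left _ _
    _ ≤ ∑ k, max (dd S θ j k - lam) 0 :=
        Finset.sum_le_sum_of_subset_of_nonneg (Finset.subset_univ T)
          (fun k _ _ => le_max_right _ _)

lemma μa_anti {s s' : ℝ} (θ : ℝ) (h : s ≤ s') (j : Fin S.J) : μa S s' θ j ≤ μa S s θ j := by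
  refine max_le (le_max_left _ _) ?_
  refine le_trans (Finset.sup'_le _ _ fun T hT => ?_) (le_max_right _ _)
  refine le_trans ?_ (Finset.le_sup' (armAtom S s θ j) hT)
  have hcard : (0:ℝ) < T.card := by
    exact_mod_cast Finset.card_pos.mpr (Finset.mem_filter.mp hT).2
  rw [armAtom, armAtom]
  gcongr

lemma μa_lip {s ε : ℝ} (θ : ℝ) (hε : 0 ≤ ε) (j : Fin S.J) :
    μa S s θ j ≤ μa S (s + ε) θ j + ε := by
  refine max_le (by have := μa_nonneg S (s+ε) θ j; linarith) ?_
  refine Finset.sup'_le _ _ fun T hT => ?_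
  have hcard1 : (1:ℝ) ≤ T.card := by
    exact_mod_cast Finset.card_pos.mpr (Finset.mem_filter.mp hT).2
  have hcard : (0:ℝ) < T.card := by linarith
  have h1 : armAtom S s θ j T ≤ armAtom S (s + ε) θ j T + ε := by
    rw [armAtom, armAtom]
    have hdiv : ε / (T.card : ℝ) ≤ ε := div_le_self hε hcard1
    have : ((∑ k ∈ T, dd S θ j k) - S.η j - s) / T.card
        = ((∑ k ∈ T, dd S θ j k) - S.η j - (s + ε)) / T.card + ε / T.card := by
      field_simp
      ring
    rw [this]; linarith
  refine h1.trans ?_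
  have h2 : armAtom S (s + ε) θ j T ≤ μa S (s+ε) θ j :=
    μa_ge S _ _ _ (Finset.mem_filter.mp hT).2
  linarith

/-! #### The equivalence and fixed point -/

lemma Aat_le_μa (s θ : ℝ) (γ : Gam S) (j : Fin S.J) : Aat S s θ γ j ≤ μa S s θ j := by
  rw [Aat]
  by_cases h : γ j = ∅
  · rw [if_pos h]; exact μa_nonneg S s θ j
  · rw [if_neg h]
    exact μa_ge S s θ j (Finset.nonempty_iff_ne_empty.mpr h)

lemma rr_nonneg (γ : Gam S) (j : Fin S.J) : 0 ≤ rr S γ j := by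
  rw [rr]; split
  · exact le_refl 0
  · positivity

lemma Dz_pos (γ : Gam S) : 0 < 1 + ∑ j, rr S γ j := by
  have : 0 ≤ ∑ j, rr S γ j := Finset.sum_nonneg fun j _ => rr_nonneg S γ j
  linarith

lemma NN_sigstar (γ : Gam S) (θ : ℝ) (j : Fin S.J) :
    NN S γ (σstar S θ) θ j = if γ j = ∅ then 0 else ((∑ k ∈ γ j, dd S θ j k) - S.η j) / ((γ j).card : ℝ) := by
  rw [NN]
  by_cases h : γ j = ∅
  · rw [if_pos h, if_pos h]
  · rw [if_neg h, if_neg h]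
    congr 2
    refine Finset.sum_congr rfl fun k _ => ?_
    rw [σstar, dd, min_def]
    by_cases hc : S.η j + θ ≤ S.Δ j k
    · rw [if_pos hc, if_pos (by simpa using hc)]
    · rw [if_neg hc, if_neg (by simpa using hc)]

lemma NN_sigstar_le (γ : Gam S) (σ : Sig S) (θ : ℝ) (j : Fin S.J) :
    NN S γ (σstar S θ) θ j ≤ NN S γ σ θ j := by
  rw [NN_sigstar, NN]
  by_cases h : γ j = ∅
  · rw [if_pos h, if_pos h]
  · rw [if_neg h, if_neg h]
    have hcard : (0:ℝ) < (γ j).card :=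
      by exact_mod_cast Finset.card_pos.mpr (Finset.nonempty_iff_ne_empty.mpr h)
    gcongr with k hk
    cases hσ : σ j k
    · simp only [hσ, Bool.false_eq_true, if_false]; exact min_le_right _ _
    · simp only [hσ, if_true]; exact min_le_left _ _

lemma Aat_eq (s θ : ℝ) (γ : Gam S) (j : Fin S.J) :
    Aat S s θ γ j = NN S γ (σstar S θ) θ j - rr S γ j * s := by
  rw [Aat, NN_sigstar, rr]
  by_cases h : γ j = ∅
  · rw [if_pos h, if_pos h, if_pos h]; ring
  · rw [if_neg h, if_neg h, if_neg h, armAtom]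
    have hcard : (0:ℝ) < (γ j).card :=
      by exact_mod_cast Finset.card_pos.mpr (Finset.nonempty_iff_ne_empty.mpr h)
    field_simp

lemma sumA_identity (s θ : ℝ) (γ : Gam S) :
    (∑ j, Aat S s θ γ j) - s = (1 + ∑ j, rr S γ j) * (ζ S γ (σstar S θ) θ - s) := by
  have hD := Dz_pos S γ
  have h1 : ∑ j, Aat S s θ γ j = (∑ j, NN S γ (σstar S θ) θ j) - (∑ j, rr S γ j) * s := by
    calc ∑ j, Aat S s θ γ j
        = ∑ j, (NN S γ (σstar S θ) θ j - rr S γ j * s) :=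
          Finset.sum_congr rfl fun j _ => Aat_eq S s θ γ j
      _ = (∑ j, NN S γ (σstar S θ) θ j) - ∑ j, rr S γ j * s := Finset.sum_sub_distrib _ _
      _ = (∑ j, NN S γ (σstar S θ) θ j) - (∑ j, rr S γ j) * s := by rw [Finset.sum_mul]
  rw [h1, ζ]
  field_simp
  ring

lemma hE (s θ : ℝ) : s ≤ Φ S s θ ↔ s ≤ MM S θ := by
  constructor
  · intro h
    have hch : ∀ j : Fin S.J, ∃ T : Finset (Fin (S.n j)),
        μa S s θ j = (if T = ∅ then 0 else armAtom S s θ j T) := by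
      intro j
      rcases lt_or_eq_of_le (μa_nonneg S s θ j) with hpos | hzero
      · obtain ⟨T, hTne, hTeq⟩ := μa_attain S hpos
        exact ⟨T, by rw [if_neg (Finset.nonempty_iff_ne_empty.mp hTne)]; exact hTeq⟩
      · exact ⟨∅, by rw [if_pos rfl]; exact hzero.symm⟩
    choose γ hγ using hch
    have hΦ : Φ S s θ = ∑ j, Aat S s θ γ j :=
      Finset.sum_congr rfl fun j _ => by rw [hγ j, Aat]
    have hz : s ≤ ζ S γ (σstar S θ) θ := by
      have h0 : 0 ≤ (1 + ∑ j, rr S γ j) * (ζ S γ (σstar S θ) θ - s) := by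
        rw [← sumA_identity, ← hΦ]; linarith
      nlinarith [Dz_pos S γ]
    refine le_trans ?_ (Finset.le_sup' _ (Finset.mem_univ γ))
    refine Finset.le_inf' _ _ fun σ _ => ?_
    refine hz.trans ?_
    rw [ζ, ζ]
    gcongr
    · exact le_of_lt (Dz_pos S γ)
    · exact NN_sigstar_le S γ σ θ _
  · intro h
    obtain ⟨γ, _, hγ⟩ := Finset.exists_mem_eq_sup' (Finset.univ_nonempty)
      (fun γ : Gam S => Finset.univ.inf' Finset.univ_nonempty (fun σ : Sig S => ζ S γ σ θ))
    have hz : s ≤ ζ S γ (σstar S θ) θ := by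
      refine le_trans ?_ (Finset.inf'_le (fun σ => ζ S γ σ θ) (Finset.mem_univ (σstar S θ)))
      rw [MM, hγ] at h; exact h
    have h0 : 0 ≤ (∑ j, Aat S s θ γ j) - s := by
      rw [sumA_identity]
      have := Dz_pos S γ
      nlinarith
    have : ∑ j, Aat S s θ γ j ≤ Φ S s θ :=
      Finset.sum_le_sum fun j _ => Aat_le_μa S s θ γ j
    rw [Φ] at this ⊢
    linarith

lemma Φ_nonneg (s θ : ℝ) : 0 ≤ Φ S s θ :=
  Finset.sum_nonneg fun j _ => μa_nonneg S s θ j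

lemma Φ_anti {s s' : ℝ} (θ : ℝ) (h : s ≤ s') : Φ S s' θ ≤ Φ S s θ :=
  Finset.sum_le_sum fun j _ => μa_anti S θ h j

lemma FP {θ : ℝ} (hθ : 0 ≤ θ) : sstar S θ = min θ (Φ S (sstar S θ) θ) := by
  by_cases hM : θ ≤ MM S θ
  · have hs : sstar S θ = θ := min_eq_left hM
    rw [hs]
    have : θ ≤ Φ S θ θ := (hE S θ θ).mpr hM
    rw [min_eq_left this]
  · push_neg at hM
    have hs : sstar S θ = MM S θ := min_eq_right (le_of_lt hM)
    rw [hs]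
    have h1 : MM S θ ≤ Φ S (MM S θ) θ := (hE S _ θ).mpr (le_refl _)
    have h2 : Φ S (MM S θ) θ ≤ MM S θ := by
      by_contra hlt
      push_neg at hlt
      set ε := (Φ S (MM S θ) θ - MM S θ) / (1 + (S.J : ℝ)) with hεdef
      have hJ : (0:ℝ) < 1 + (S.J : ℝ) := by positivity
      have hε : 0 < ε := div_pos (by linarith) hJ
      have hlip : Φ S (MM S θ) θ ≤ Φ S (MM S θ + ε) θ + (S.J : ℝ) * ε := by
        rw [Φ, Φ]
        calc ∑ j, μa S (MM S θ) θ j ≤ ∑ j, (μa S (MM S θ + ε) θ j + ε) :=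
              Finset.sum_le_sum fun j _ => μa_lip S θ (le_of_lt hε) j
          _ = ∑ j, μa S (MM S θ + ε) θ j + (S.J : ℝ) * ε := by
              rw [Finset.sum_add_distrib, Finset.sum_const, Finset.card_univ,
                Fintype.card_fin, nsmul_eq_mul]
      have hkey : MM S θ + ε ≤ Φ S (MM S θ + ε) θ := by
        have : Φ S (MM S θ) θ = MM S θ + (1 + (S.J:ℝ)) * ε := by
          rw [hεdef]; field_simp; ring
        nlinarith
      have := (hE S (MM S θ + ε) θ).mp hkey
      linarith
    have heq : Φ S (MM S θ) θ = MM S θ := le_antisymm h2 h1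
    rw [heq, min_eq_right (le_of_lt hM)]

lemma sstar_nonneg {θ : ℝ} (hθ : 0 ≤ θ) : 0 ≤ sstar S θ := by
  rw [FP S hθ]
  exact le_min hθ (Φ_nonneg S _ θ)

lemma sstar_le (θ : ℝ) : sstar S θ ≤ θ := min_le_left _ _

/-! #### The Lipschitz bound -/

lemma armB {s θ δ : ℝ} (hs : 0 ≤ s) (hδ : 0 ≤ δ) (j : Fin S.J)
    (h : μa S s θ j < μa S (s + δ) (θ + δ) j) :
    ∃ u : ℕ, 1 ≤ u ∧ μa S (s + δ) (θ + δ) j - μa S s θ j ≤ (1 - 1/(u:ℝ)) * δ ∧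
      θ - s/(u:ℝ) ≤ μa S s θ j := by
  classical
  set lam := μa S s θ j with hlamdef
  set lam' := μa S (s + δ) (θ + δ) j with hlamdef'
  have hlam0 : 0 ≤ lam := μa_nonneg S s θ j
  have hlam' : 0 < lam' := lt_of_le_of_lt hlam0 h
  obtain ⟨T, hTne, hTeq⟩ := μa_attain S hlam'
  set U : Finset (Fin (S.n j)) := T.filter (fun k => dd S θ j k < dd S (θ + δ) j k) with hUdef
  set u := U.card with hu
  have hmono : ∀ k, dd S θ j k ≤ dd S (θ + δ) j k := fun k => by
    rw [dd, dd]; exact min_le_min (by linarith) (le_refl _)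
  have hlip : ∀ k, dd S (θ + δ) j k ≤ dd S θ j k + δ := fun k => by
    rw [dd, dd]
    rcases le_total (S.η j + θ) (S.Δ j k) with hc | hc
    · rw [min_eq_left hc]
      exact le_trans (min_le_left _ _) (by linarith)
    · rw [min_eq_right hc]
      exact le_trans (min_le_right _ _) (by linarith)
  have hTcard : (0:ℝ) < T.card := by exact_mod_cast Finset.card_pos.mpr hTne
  have hTcard1 : (1:ℝ) ≤ T.card := by exact_mod_cast Finset.card_pos.mpr hTne
  have hUsub : U ⊆ T := Finset.filter_subset _ _
  have hucard : (u:ℝ) ≤ T.card := by exact_mod_cast Finset.card_le_card hUsub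
  -- sum bound
  have hsum : ∑ k ∈ T, dd S (θ + δ) j k ≤ (∑ k ∈ T, dd S θ j k) + u * δ := by
    have hsplit := Finset.sum_filter_add_sum_filter_not T
      (fun k => dd S θ j k < dd S (θ + δ) j k) (fun k => dd S (θ + δ) j k)
    have hsplit2 := Finset.sum_filter_add_sum_filter_not T
      (fun k => dd S θ j k < dd S (θ + δ) j k) (fun k => dd S θ j k)
    have h1 : ∑ k ∈ U, dd S (θ + δ) j k ≤ (∑ k ∈ U, dd S θ j k) + u * δ := by
      calc ∑ k ∈ U, dd S (θ + δ) j k ≤ ∑ k ∈ U, (dd S θ j k + δ) :=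
            Finset.sum_le_sum fun k _ => hlip k
        _ = (∑ k ∈ U, dd S θ j k) + u * δ := by
            rw [Finset.sum_add_distrib, Finset.sum_const, nsmul_eq_mul]
    have h2 : ∑ k ∈ T.filter (fun k => ¬ dd S θ j k < dd S (θ + δ) j k), dd S (θ + δ) j k
        = ∑ k ∈ T.filter (fun k => ¬ dd S θ j k < dd S (θ + δ) j k), dd S θ j k := by
      refine Finset.sum_congr rfl fun k hk => ?_
      have := (Finset.mem_filter.mp hk).2
      push_neg at this
      exact le_antisymm this (hmono k)
    rw [← hsplit, ← hsplit2, h2]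
    linarith
  -- lower bound on lam from T
  have hTlow : (((∑ k ∈ T, dd S θ j k) - S.η j - s) / T.card : ℝ) ≤ lam :=
    μa_ge S s θ j hTne
  -- lam' value
  have hval : lam' = ((∑ k ∈ T, dd S (θ + δ) j k) - S.η j - (s + δ)) / T.card := by
    rw [hlamdef', hTeq, armAtom]
  -- main diff bound
  have hdiff : lam' - lam ≤ ((u:ℝ) - 1) * δ / T.card := by
    rw [hval]
    have : ((∑ k ∈ T, dd S (θ + δ) j k) - S.η j - (s + δ)) / T.card
        - ((∑ k ∈ T, dd S θ j k) - S.η j - s) / T.card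
        ≤ ((u:ℝ) - 1) * δ / T.card := by
      rw [div_sub_div_same]
      gcongr
      linarith
    linarith
  -- u ≥ 1
  have hu1 : 1 ≤ u := by
    by_contra hc
    push_neg at hc
    interval_cases u
    · have : lam' - lam ≤ (0 - 1) * δ / T.card := by exact_mod_cast hdiff
      have hend : ((0:ℝ) - 1) * δ / T.card ≤ 0 := by
        apply div_nonpos_of_nonpos_of_nonneg <;> nlinarith
      linarith
  have hu0 : (0:ℝ) < u := by exact_mod_cast hu1
  have hu1' : (1:ℝ) ≤ (u:ℝ) := by exact_mod_cast hu1
  refine ⟨u, hu1, ?_, ?_⟩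
  · -- lam' - lam ≤ (1 - 1/u) δ
    refine hdiff.trans ?_
    have h1 : ((u:ℝ) - 1) * δ / T.card ≤ ((u:ℝ) - 1) * δ / u := by
      gcongr <;> nlinarith [hucard, hu1', hδ]
    refine h1.trans ?_
    have h2 : ((u:ℝ) - 1) * δ / u = (1 - 1/(u:ℝ)) * δ := by
      field_simp
    rw [h2]
  · -- θ - s/u ≤ lam
    have hUne : U.Nonempty := Finset.card_pos.mp hu1
    have hUc : ((∑ k ∈ U, dd S θ j k) - S.η j - s) / U.card ≤ lam := μa_ge S s θ j hUne
    have hUval : ∀ k ∈ U, dd S θ j k = S.η j + θ := by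
      intro k hk
      have hklt := (Finset.mem_filter.mp hk).2
      simp only [dd] at hklt ⊢
      rcases le_total (S.η j + θ) (S.Δ j k) with hc | hc
      · exact min_eq_left hc
      · exfalso
        rw [min_eq_right hc] at hklt
        have : min (S.η j + (θ + δ)) (S.Δ j k) ≤ S.Δ j k := min_le_right _ _
        linarith
    have hsumU : ∑ k ∈ U, dd S θ j k = u * (S.η j + θ) := by
      rw [Finset.sum_congr rfl hUval, Finset.sum_const, nsmul_eq_mul]
    rw [hsumU] at hUc
    have hη := η_nonneg S j
    have hexp : ((u:ℝ) * (S.η j + θ) - S.η j - s) / u = S.η j + θ - (S.η j + s) / u := by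
      field_simp
      ring
    rw [hexp] at hUc
    have : (S.η j + s) / u ≤ S.η j + s / u := by
      rw [add_div]
      have : S.η j / u ≤ S.η j := div_le_self hη (by exact_mod_cast hu1)
      linarith
    linarith

lemma PhiB {s θ δ : ℝ} (hs : 0 ≤ s) (hsθ : s < θ) (hδ : 0 ≤ δ) (hfix : Φ S s θ = s) :
    Φ S (s + δ) (θ + δ) ≤ s + δ := by
  classical
  have hθ : 0 < θ := lt_of_le_of_lt hs hsθ
  set P : Fin S.J → Prop := fun j => μa S s θ j < μa S (s + δ) (θ + δ) j with hPdef
  set B : Finset (Fin S.J) := Finset.univ.filter P with hBdef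
  have harm : ∀ j, ∃ u : ℕ, 1 ≤ u ∧ (j ∈ B →
      μa S (s + δ) (θ + δ) j - μa S s θ j ≤ (1 - 1/(u:ℝ)) * δ ∧ θ - s/(u:ℝ) ≤ μa S s θ j) := by
    intro j
    by_cases hj : j ∈ B
    · obtain ⟨u, h1, h2, h3⟩ := armB S hs hδ j (Finset.mem_filter.mp hj).2
      exact ⟨u, h1, fun _ => ⟨h2, h3⟩⟩
    · exact ⟨1, le_refl 1, fun h => absurd h hj⟩
  choose uu hu1 hcond using harm
  have hu1' : ∀ j, (1:ℝ) ≤ (uu j : ℝ) := fun j => by exact_mod_cast hu1 j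
  have hupos : ∀ j, (0:ℝ) < (uu j : ℝ) := fun j => lt_of_lt_of_le zero_lt_one (hu1' j)
  set β : ℝ := ∑ j ∈ B, 1/(uu j : ℝ) with hβdef
  have hβ0 : 0 ≤ β := Finset.sum_nonneg fun j _ => by positivity
  -- the count bound
  have hBsum : (B.card : ℝ) * θ - s * β ≤ s := by
    have h1 : ∑ j ∈ B, (θ - s/(uu j : ℝ)) ≤ ∑ j ∈ B, μa S s θ j :=
      Finset.sum_le_sum fun j hj => (hcond j hj).2
    have h2 : ∑ j ∈ B, μa S s θ j ≤ ∑ j, μa S s θ j :=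
      Finset.sum_le_sum_of_subset_of_nonneg (Finset.subset_univ B)
        (fun j _ _ => μa_nonneg S s θ j)
    have h3 : ∑ j ∈ B, (θ - s/(uu j : ℝ)) = (B.card : ℝ) * θ - s * β := by
      rw [Finset.sum_sub_distrib, Finset.sum_const, nsmul_eq_mul, hβdef, Finset.mul_sum]
      congr 1
      exact Finset.sum_congr rfl fun j _ => by rw [mul_one_div]
    rw [h3] at h1
    have := hfix
    rw [Φ] at this
    linarith
  have hbβ : (B.card : ℝ) - β ≤ 1 := by
    have h1 : (B.card : ℝ) * θ ≤ s * (1 + β) := by linarith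
    have h2 : s * (1 + β) ≤ θ * (1 + β) := by nlinarith
    nlinarith
  -- final ledger
  have hsplit := Finset.sum_filter_add_sum_filter_not Finset.univ P
    (fun j => μa S (s + δ) (θ + δ) j)
  have hsplit2 := Finset.sum_filter_add_sum_filter_not Finset.univ P
    (fun j => μa S s θ j)
  have hB1 : ∑ j ∈ B, μa S (s + δ) (θ + δ) j
      ≤ ∑ j ∈ B, μa S s θ j + ∑ j ∈ B, (1 - 1/(uu j : ℝ)) * δ := by
    rw [← Finset.sum_add_distrib]
    exact Finset.sum_le_sum fun j hj => by have := (hcond j hj).1; linarith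
  have hB2 : ∑ j ∈ Finset.univ.filter (fun j => ¬ P j), μa S (s + δ) (θ + δ) j
      ≤ ∑ j ∈ Finset.univ.filter (fun j => ¬ P j), μa S s θ j := by
    refine Finset.sum_le_sum fun j hj => ?_
    have := (Finset.mem_filter.mp hj).2
    rw [hPdef] at this
    exact le_of_not_gt this
  have hB3 : ∑ j ∈ B, (1 - 1/(uu j : ℝ)) * δ ≤ δ := by
    have : ∑ j ∈ B, (1 - 1/(uu j : ℝ)) * δ = ((B.card : ℝ) - β) * δ := by
      rw [← Finset.sum_mul]
      congr 1
      rw [Finset.sum_sub_distrib, Finset.sum_const, nsmul_eq_mul, hβdef, mul_one]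
    rw [this]
    nlinarith
  have hfin : Φ S (s + δ) (θ + δ) ≤ Φ S s θ + δ := by
    rw [Φ, Φ, ← hsplit, ← hsplit2]
    have : (Finset.univ.filter P) = B := hBdef.symm
    rw [this]
    linarith
  rw [hfix] at hfin
  exact hfin

lemma sstar_lip {θ θ' : ℝ} (hθ : 0 ≤ θ) (h : θ ≤ θ') :
    sstar S θ' ≤ sstar S θ + (θ' - θ) := by
  have hθ' : 0 ≤ θ' := le_trans hθ h
  by_cases hM : θ ≤ MM S θ
  · have : sstar S θ = θ := min_eq_left hM
    rw [this]
    have := sstar_le S θ'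
    linarith
  · push_neg at hM
    set s := sstar S θ with hsdef
    have hslt : s < θ := by rw [hsdef, sstar]; exact min_lt_iff.mpr (Or.inr hM)
    have hs0 : 0 ≤ s := sstar_nonneg S hθ
    have hfix : Φ S s θ = s := by
      have hFP := FP S hθ
      rw [← hsdef] at hFP
      rcases min_cases θ (Φ S s θ) with ⟨h1, _⟩ | ⟨h1, h2⟩
      · rw [h1] at hFP; exact absurd hFP (ne_of_lt hslt)
      · rw [h1] at hFP; exact hFP.symm
    set δ := θ' - θ with hδdef
    have hδ0 : 0 ≤ δ := by rw [hδdef]; linarith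
    have hPhiB := PhiB S hs0 hslt hδ0 hfix
    have hθδ : θ + δ = θ' := by rw [hδdef]; ring
    rw [hθδ] at hPhiB
    by_contra hgt
    push_neg at hgt
    have h1 : sstar S θ' ≤ Φ S (sstar S θ') θ' := by
      have := FP S hθ'
      nth_rewrite 1 [this]
      exact min_le_right _ _
    have h2 : Φ S (sstar S θ') θ' ≤ Φ S (s + δ) θ' := Φ_anti S θ' (by linarith)
    linarith

/-! #### The projection -/

lemma pstar_mem {θ : ℝ} (hθ : 0 ≤ θ) : pstar S θ ∈ S.coreK θ := by
  have hs0 : 0 ≤ sstar S θ := sstar_nonneg S hθ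
  have hsθ : sstar S θ ≤ θ := sstar_le S θ
  refine ⟨?_, ?_, ?_, ?_⟩
  · intro j
    have hL4 := sum_max_le S (s := sstar S θ) (θ := θ) hs0 j
    have hsum : ∑ k, pstar S θ (some ⟨j, k⟩)
        = (∑ k, S.b j k) - ∑ k, max (dd S θ j k - μa S (sstar S θ) θ j) 0 := by
      rw [← Finset.sum_sub_distrib]
      rfl
    have hCeq := C_eq S j
    show S.C j ≤ pstar S θ none + ∑ k, pstar S θ (some ⟨j, k⟩)
    rw [hsum]
    show S.C j ≤ (S.v0 + sstar S θ) + ((∑ k, S.b j k) - ∑ k, max (dd S θ j k - μa S (sstar S θ) θ j) 0)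
    linarith
  · intro j k
    constructor
    · show S.bl j k ≤ S.b j k - max (dd S θ j k - μa S (sstar S θ) θ j) 0
      have h1 : max (dd S θ j k - μa S (sstar S θ) θ j) 0 ≤ S.Δ j k := by
        refine max_le ?_ (Δ_nonneg S j k)
        have := μa_nonneg S (sstar S θ) θ j
        have := dd_le_Δ S θ j k
        linarith
      rw [StarSetting.Δ] at h1
      linarith
    · show S.b j k - max (dd S θ j k - μa S (sstar S θ) θ j) 0 ≤ S.b j k
      have := le_max_right (dd S θ j k - μa S (sstar S θ) θ j) 0
      linarith
  · show S.v0 ≤ S.v0 + sstar S θ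
    linarith
  · show S.v0 + sstar S θ ≤ S.v0 + θ
    linarith

lemma pstar_vi {θ : ℝ} (hθ : 0 ≤ θ) (r : EuclideanSpace ℝ S.Idx) (hr : r ∈ S.coreK θ) :
    ∑ i, (S.vick θ i - pstar S θ i) * (r i - pstar S θ i) ≤ 0 := by
  classical
  obtain ⟨hr1, hr2, hr3, hr4⟩ := hr
  have hs0 : 0 ≤ sstar S θ := sstar_nonneg S hθ
  set ss := sstar S θ with hssdef
  set lam : Fin S.J → ℝ := fun j => μa S ss θ j with hlamdef
  set x : (j : Fin S.J) → Fin (S.n j) → ℝ := fun j k => dd S θ j k - max (dd S θ j k - lam j) 0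
    with hxdef
  set y : (j : Fin S.J) → Fin (S.n j) → ℝ := fun j k => r (some ⟨j, k⟩) - (S.b j k - dd S θ j k)
    with hydef
  set Y0 : ℝ := r none - S.v0 with hY0def
  set ν : ℝ := Φ S ss θ - ss with hνdef
  -- rewrite the sum
  have hsum : ∑ i, (S.vick θ i - pstar S θ i) * (r i - pstar S θ i)
      = (-ss) * (Y0 - ss) + ∑ j, ∑ k, (-(x j k)) * (y j k - x j k) := by
    rw [Fintype.sum_option]
    congr 1
    · show (S.v0 - (S.v0 + ss)) * (r none - (S.v0 + ss)) = (-ss) * (Y0 - ss)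
      rw [hY0def]; ring
    · rw [← Finset.univ_sigma_univ, Finset.sum_sigma]
      refine Finset.sum_congr rfl fun j _ => Finset.sum_congr rfl fun k _ => ?_
      have hv := vick_some S θ j k
      show (S.vick θ (some ⟨j, k⟩) - pstar S θ (some ⟨j, k⟩)) * (r (some ⟨j, k⟩) - pstar S θ (some ⟨j, k⟩)) = _
      rw [hv]
      show (S.b j k - dd S θ j k - (S.b j k - max (dd S θ j k - lam j) 0))
          * (r (some ⟨j, k⟩) - (S.b j k - max (dd S θ j k - lam j) 0)) = _
      rw [hxdef, hydef]
      ring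
  rw [hsum]
  -- the dual decomposition
  set m : (j : Fin S.J) → Fin (S.n j) → ℝ := fun j k => lam j - x j k with hmdef
  set E : Fin S.J → ℝ := fun j => (Y0 - ss) + ∑ k, (y j k - x j k) with hEdef
  have hPhi : Φ S ss θ = ∑ j, lam j := rfl
  have hid : ss * (Y0 - ss) + ∑ j, ∑ k, x j k * (y j k - x j k)
      = (∑ j, lam j * E j) - ν * (Y0 - ss) - ∑ j, ∑ k, m j k * (y j k - x j k) := by
    have hν : ∑ j, lam j = ss + ν := by rw [hνdef, hPhi]; ring
    have h1 : ∑ j, lam j * E j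
        = (∑ j, lam j) * (Y0 - ss) + ∑ j, ∑ k, lam j * (y j k - x j k) := by
      calc ∑ j, lam j * E j = ∑ j, (lam j * (Y0 - ss) + ∑ k, lam j * (y j k - x j k)) := by
            refine Finset.sum_congr rfl fun j _ => ?_
            rw [hEdef, mul_add, Finset.mul_sum]
        _ = _ := by rw [Finset.sum_add_distrib, ← Finset.sum_mul]
    have h2 : ∑ j, ∑ k, m j k * (y j k - x j k)
        = (∑ j, ∑ k, lam j * (y j k - x j k)) - ∑ j, ∑ k, x j k * (y j k - x j k) := by
      rw [← Finset.sum_sub_distrib]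
      refine Finset.sum_congr rfl fun j _ => ?_
      rw [← Finset.sum_sub_distrib]
      refine Finset.sum_congr rfl fun k _ => ?_
      rw [hmdef]
      ring
    rw [h1, h2, hν]
    ring
  -- nonnegativity facts
  have hlamE : ∀ j, 0 ≤ lam j * E j := by
    intro j
    rcases eq_or_lt_of_le (μa_nonneg S ss θ j) with hz | hpos
    · have hl0 : lam j = 0 := by rw [hlamdef]; exact hz.symm
      rw [hl0, zero_mul]
    · have hl0 : 0 < lam j := by rw [hlamdef]; exact hpos
      refine mul_nonneg (le_of_lt hl0) ?_
      have ha : (∑ k, dd S θ j k) - S.η j ≤ Y0 + ∑ k, y j k := by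
        have h1 := hr1 j
        have hCeq := C_eq S j
        have h2 : ∑ k, y j k = (∑ k, r (some ⟨j,k⟩)) - (∑ k, S.b j k) + ∑ k, dd S θ j k := by
          rw [← Finset.sum_sub_distrib, ← Finset.sum_add_distrib]
          refine Finset.sum_congr rfl fun k _ => by simp only [hydef]; ring
        rw [hY0def, h2]
        linarith
      have hb : ss + ∑ k, x j k = (∑ k, dd S θ j k) - S.η j := by
        have hmax : ∑ k, max (dd S θ j k - lam j) 0 = S.η j + ss := sum_max_eq S hs0 hl0
        have h3 : ∑ k, x j k = (∑ k, dd S θ j k) - ∑ k, max (dd S θ j k - lam j) 0 := by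
          rw [← Finset.sum_sub_distrib]
        rw [h3, hmax]
        ring
      have hEexp : E j = (Y0 + ∑ k, y j k) - (ss + ∑ k, x j k) := by
        simp only [hEdef]
        rw [Finset.sum_sub_distrib]
        ring
      rw [hEexp, hb]
      linarith
  have hν0 : 0 ≤ ν := by
    have hFP := FP S hθ
    rw [← hssdef] at hFP
    have h2 : ss ≤ Φ S ss θ := by
      nth_rewrite 1 [hFP]
      exact min_le_right _ _
    rw [hνdef]
    linarith
  have hνterm : ν * (Y0 - ss) ≤ 0 := by
    rcases eq_or_lt_of_le hν0 with hz | hpos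
    · rw [← hz, zero_mul]
    · have hssθ : ss = θ := by
        have hFP := FP S hθ
        rw [← hssdef] at hFP
        rcases min_cases θ (Φ S ss θ) with ⟨h1, _⟩ | ⟨h1, _⟩
        · rw [h1] at hFP; exact hFP
        · rw [h1] at hFP; rw [hνdef] at hpos; linarith
      have hY : Y0 - ss ≤ 0 := by
        rw [hY0def, hssθ]
        linarith
      exact mul_nonpos_of_nonneg_of_nonpos (le_of_lt hpos) hY
  have hmterm : ∀ j, ∀ k, m j k * (y j k - x j k) ≤ 0 := by
    intro j k
    rcases le_or_gt (lam j) (dd S θ j k) with hle | hlt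
    · have hm0 : m j k = 0 := by
        simp only [hmdef, hxdef]
        rw [max_eq_left (by linarith : (0:ℝ) ≤ dd S θ j k - lam j)]
        ring
      rw [hm0, zero_mul]
    · have hm0 : 0 ≤ m j k := by
        simp only [hmdef, hxdef]
        rw [max_eq_right (by linarith : dd S θ j k - lam j ≤ (0:ℝ))]
        linarith
      have hx : x j k = dd S θ j k := by
        simp only [hxdef]
        rw [max_eq_right (by linarith : dd S θ j k - lam j ≤ (0:ℝ))]
        ring
      have hyx : y j k - x j k ≤ 0 := by
        rw [hx]
        simp only [hydef]
        have := (hr2 j k).2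
        linarith
      exact mul_nonpos_of_nonneg_of_nonpos hm0 hyx
  -- combine
  have hmain : 0 ≤ ss * (Y0 - ss) + ∑ j, ∑ k, x j k * (y j k - x j k) := by
    rw [hid]
    have h1 : 0 ≤ ∑ j, lam j * E j := Finset.sum_nonneg fun j _ => hlamE j
    have h2 : ∑ j, ∑ k, m j k * (y j k - x j k) ≤ 0 :=
      Finset.sum_nonpos fun j _ => Finset.sum_nonpos fun k _ => hmterm j k
    linarith
  have hflip : ∑ j, ∑ k, (-(x j k)) * (y j k - x j k)
      = -(∑ j, ∑ k, x j k * (y j k - x j k)) := by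
    rw [← Finset.sum_neg_distrib]
    refine Finset.sum_congr rfl fun j _ => ?_
    rw [← Finset.sum_neg_distrib]
    exact Finset.sum_congr rfl fun k _ => by ring
  rw [hflip]
  linarith

lemma key {θ : ℝ} (hθ : 0 ≤ θ) (q : EuclideanSpace ℝ S.Idx)
    (hq : IsProjOn (S.coreK θ) (S.vick θ) q) : q none = S.v0 + sstar S θ := by
  classical
  obtain ⟨hqmem, hqmin⟩ := hq
  have hdist : ∀ (x y : EuclideanSpace ℝ S.Idx), dist x y = Real.sqrt (∑ i, (x i - y i)^2) := by
    intro x y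
    rw [EuclideanSpace.dist_eq]
    congr 1
    exact Finset.sum_congr rfl fun i _ => by rw [Real.dist_eq, sq_abs]
  have hDsq_nonneg : ∀ (x y : EuclideanSpace ℝ S.Idx), 0 ≤ ∑ i, (x i - y i)^2 :=
    fun x y => Finset.sum_nonneg fun i _ => sq_nonneg _
  have hdist_mono : ∀ (x y z : EuclideanSpace ℝ S.Idx),
      (∑ i, (x i - y i)^2) ≤ (∑ i, (x i - z i)^2) → dist x y ≤ dist x z := by
    intro x y z h
    rw [hdist, hdist]
    exact Real.sqrt_le_sqrt h
  have hdist_mono' : ∀ (x y z : EuclideanSpace ℝ S.Idx),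
      dist x y ≤ dist x z → (∑ i, (x i - y i)^2) ≤ (∑ i, (x i - z i)^2) := by
    intro x y z h
    rw [hdist, hdist] at h
    have h1 := Real.sq_sqrt (hDsq_nonneg x y)
    have h2 := Real.sq_sqrt (hDsq_nonneg x z)
    nlinarith [Real.sqrt_nonneg (∑ i, (x i - y i)^2), Real.sqrt_nonneg (∑ i, (x i - z i)^2)]
  set v := S.vick θ with hvdef
  set P := pstar S θ with hPdef
  have hPmem : P ∈ S.coreK θ := pstar_mem S hθ
  -- P is a minimizer via the variational inequality
  have hPmin : ∀ r ∈ S.coreK θ, (∑ i, (v i - P i)^2) ≤ (∑ i, (v i - r i)^2) := by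
    intro r hr
    have hvi := pstar_vi S hθ r hr
    have hexp : ∑ i, (v i - r i)^2
        = (∑ i, (v i - P i)^2) - 2 * (∑ i, (v i - P i) * (r i - P i)) + ∑ i, (r i - P i)^2 := by
      have h1 : ∑ i, (v i - r i)^2
          = ∑ i, ((v i - P i)^2 - 2*((v i - P i) * (r i - P i)) + (r i - P i)^2) :=
        Finset.sum_congr rfl fun i _ => by ring
      rw [h1, Finset.sum_add_distrib, Finset.sum_sub_distrib, ← Finset.mul_sum]
    rw [hexp]
    have := Finset.sum_nonneg (fun i (_ : i ∈ Finset.univ) => sq_nonneg (r i - P i))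
    linarith
  -- both are minimizers, equal distance
  have hDqP : (∑ i, (v i - q i)^2) = (∑ i, (v i - P i)^2) :=
    le_antisymm (hdist_mono' v q P (hqmin P hPmem)) (hPmin q hqmem)
  -- midpoint
  set mid : EuclideanSpace ℝ S.Idx := WithLp.toLp 2 (fun i => (q i + P i)/2) with hmiddef
  have hmidmem : mid ∈ S.coreK θ := by
    obtain ⟨hq1, hq2, hq3, hq4⟩ := hqmem
    obtain ⟨hP1, hP2, hP3, hP4⟩ := hPmem
    refine ⟨?_, ?_, ?_, ?_⟩
    · intro j
      have h1 := hq1 j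
      have h2 := hP1 j
      have hsum : ∑ k, mid (some ⟨j,k⟩)
          = ((∑ k, q (some ⟨j,k⟩)) + ∑ k, P (some ⟨j,k⟩))/2 := by
        rw [← Finset.sum_add_distrib, Finset.sum_div]
      show S.C j ≤ mid none + ∑ k, mid (some ⟨j,k⟩)
      rw [hsum]
      show S.C j ≤ (q none + P none)/2 + ((∑ k, q (some ⟨j,k⟩)) + ∑ k, P (some ⟨j,k⟩))/2
      linarith
    · intro j k
      have h1 := hq2 j k
      have h2 := hP2 j k
      constructor
      · show S.bl j k ≤ (q (some ⟨j,k⟩) + P (some ⟨j,k⟩))/2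
        cases h1; cases h2; linarith
      · show (q (some ⟨j,k⟩) + P (some ⟨j,k⟩))/2 ≤ S.b j k
        cases h1; cases h2; linarith
    · show S.v0 ≤ (q none + P none)/2
      linarith
    · show (q none + P none)/2 ≤ S.v0 + θ
      linarith
  -- parallelogram
  have hmid : (∑ i, (v i - mid i)^2)
      = ((∑ i, (v i - q i)^2) + ∑ i, (v i - P i)^2)/2 - (∑ i, (q i - P i)^2)/4 := by
    have h1 : ∑ i, (v i - mid i)^2
        = ∑ i, ((v i - q i)^2/2 + (v i - P i)^2/2 - (q i - P i)^2/4) :=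
      Finset.sum_congr rfl fun i _ => by simp only [hmiddef]; ring
    rw [h1, Finset.sum_sub_distrib, Finset.sum_add_distrib,
      ← Finset.sum_div, ← Finset.sum_div, ← Finset.sum_div]
    ring
  have hq_le_mid : (∑ i, (v i - q i)^2) ≤ (∑ i, (v i - mid i)^2) :=
    hdist_mono' v q mid (hqmin mid hmidmem)
  have hQP0 : (∑ i, (q i - P i)^2) ≤ 0 := by
    rw [hmid, hDqP] at hq_le_mid
    linarith
  have hnone : (q none - P none)^2 = 0 := by
    have hle : (q none - P none)^2 ≤ ∑ i, (q i - P i)^2 :=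
      Finset.single_le_sum (fun i (_ : i ∈ Finset.univ) => sq_nonneg (q i - P i))
        (Finset.mem_univ none)
    have := sq_nonneg (q none - P none)
    linarith
  have : q none = P none := by
    have := sq_eq_zero_iff.mp hnone
    linarith
  rw [this]
  rfl

lemma ζ_affine (γ : Gam S) (σ : Sig S) : IsAffine (fun θ => ζ S γ σ θ) := by
  have hNN : ∀ j, IsAffine (fun θ => NN S γ σ θ j) := by
    intro j
    by_cases h : γ j = ∅
    · simp only [NN, if_pos h]
      exact IsAffine.const 0
    · simp only [NN, if_neg h]
      have hsum : IsAffine (fun θ => ∑ k ∈ γ j, (if σ j k then S.η j + θ else S.Δ j k)) := by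
        apply IsAffine.sum
        intro k _
        cases hσ : σ j k
        · simp only [hσ, Bool.false_eq_true, if_false]
          exact IsAffine.const _
        · simp only [hσ, if_true]
          exact ⟨1, S.η j, fun x => by ring⟩
      obtain ⟨A, B, hAB⟩ := hsum
      refine IsAffine.div_const ⟨A, B - S.η j, fun x => ?_⟩ _
      have h1 := hAB x
      simp only [] at h1 ⊢
      rw [h1]
      ring
  have htot : IsAffine (fun θ => ∑ j, NN S γ σ θ j) := IsAffine.sum _ _ (fun j _ => hNN j)
  exact IsAffine.div_const htot _

lemma pl_final : PiecewiseLinearOnIci (fun θ => S.v0 + min θ (MM S θ)) := by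
  classical
  set g : Option (Gam S × Sig S) → ℝ → ℝ :=
    fun o => Option.elim o (fun x => x) (fun gs x => ζ S gs.1 gs.2 x) with hgdef
  have haff : ∀ o, IsAffine (g o) := by
    intro o
    cases o with
    | none => exact ⟨1, 0, fun x => by simp [hgdef]⟩
    | some gs => exact ζ_affine S gs.1 gs.2
  have hFsel : ∀ I : Set ℝ, Comp g I → ∃ i, ∀ x ∈ I, (min x (MM S x)) = g i x := by
    intro I hcomp
    have hinner : ∀ γ ∈ (Finset.univ : Finset (Gam S)), ∃ i, ∀ x ∈ I,
        (Finset.univ.inf' Finset.univ_nonempty (fun σ : Sig S => ζ S γ σ x)) = g i x := by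
      intro γ _
      exact sel_inf' Finset.univ Finset.univ_nonempty (fun σ x => ζ S γ σ x) g I hcomp
        (fun σ _ => ⟨some (γ, σ), fun x _ => rfl⟩)
    obtain ⟨i1, hi1⟩ := sel_sup' Finset.univ Finset.univ_nonempty
      (fun γ x => Finset.univ.inf' Finset.univ_nonempty (fun σ : Sig S => ζ S γ σ x))
      g I hcomp hinner
    have hMM : ∀ x, MM S x
        = Finset.univ.sup' Finset.univ_nonempty
          (fun γ : Gam S => Finset.univ.inf' Finset.univ_nonempty (fun σ : Sig S => ζ S γ σ x)) :=
      fun x => rfl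
    rcases hcomp none i1 with hc | hc
    · refine ⟨none, fun x hx => ?_⟩
      rw [hMM x, hi1 x hx]
      exact min_eq_left (hc x hx)
    · refine ⟨i1, fun x hx => ?_⟩
      rw [hMM x, hi1 x hx]
      exact min_eq_right (hc x hx)
  have hPL0 : PiecewiseLinearOnIci (fun x => min x (MM S x)) := main_PL g haff _ hFsel
  exact PL_const_add _ _ hPL0

end StarProof

/-- in the star network setting, the quadratic-rule price of buyer zero,
`θ ↦ p_{0,θ}`, is piecewise linear on `[0,∞)` and increases at rate at most one. -/
theorem quadratic_price_slope_le_one (S : StarSetting)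
    (p : ℝ → EuclideanSpace ℝ S.Idx)
    (hp : ∀ θ : ℝ, 0 ≤ θ → IsProjOn (S.coreK θ) (S.vick θ) (p θ)) :
    PiecewiseLinearOnIci (fun θ => p θ none) ∧
    ∀ θ θ' : ℝ, 0 ≤ θ → θ ≤ θ' → p θ' none - p θ none ≤ θ' - θ := by
  classical
  have hkey : ∀ θ : ℝ, 0 ≤ θ → p θ none = S.v0 + StarProof.sstar S θ :=
    fun θ hθ => StarProof.key S hθ (p θ) (hp θ hθ)
  constructor
  · refine StarProof.PL_congr _ _ ?_ (StarProof.pl_final S)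
    intro x hx
    rw [hkey x hx]
    rfl
  · intro θ θ' h0 hle
    rw [hkey θ h0, hkey θ' (le_trans h0 hle)]
    have := StarProof.sstar_lip S h0 hle
    linarith
end

section
/- In the star network setting, for every θ ≥ 0 the buyer-zero coordinate of the projection of the Vikrey vector onto the core equals the minimum of buyer zero's bid and the buyer-zero coordinate of the projection onto the expanded core: p_{0,θ} = min{ v_0 + θ, p̃_{0,θ} }. -/
open scoped RealInnerProductSpace

section AuxVI

variable {E : Type*} [NormedAddCommGroup E] [InnerProductSpace ℝ E]

/-- If `q` is at least as close to `v` as every point `q + t • (r - q)` for small `t > 0`,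
then the variational inequality `⟪v - q, r - q⟫ ≤ 0` holds. -/
lemma vi_of_small_t {v q r : E}
    (h : ∃ t0 : ℝ, 0 < t0 ∧ ∀ t : ℝ, 0 < t → t ≤ t0 →
      dist v q ≤ dist v (q + t • (r - q))) :
    ⟪v - q, r - q⟫ ≤ 0 := by
  by_contra hc
  push_neg at hc
  obtain ⟨t0, ht0, h⟩ := h
  have hrq : r - q ≠ 0 := by
    intro h0
    rw [h0, inner_zero_right] at hc
    exact lt_irrefl 0 hc
  set c := ⟪v - q, r - q⟫ with hcdef
  have hn : 0 < ‖r - q‖ ^ 2 := pow_pos (norm_pos_iff.mpr hrq) 2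
  set t := min t0 (c / ‖r - q‖ ^ 2) with htdef
  have htpos : 0 < t := lt_min ht0 (by positivity)
  have hle := h t htpos (min_le_left _ _)
  rw [dist_eq_norm, dist_eq_norm] at hle
  have hexp : ‖v - (q + t • (r - q))‖ ^ 2
      = ‖v - q‖ ^ 2 - 2 * (t * c) + t ^ 2 * ‖r - q‖ ^ 2 := by
    have hv : v - (q + t • (r - q)) = (v - q) - t • (r - q) := by abel
    rw [hv, norm_sub_sq_real, real_inner_smul_right, norm_smul]
    simp only [Real.norm_eq_abs, mul_pow, sq_abs]
    try ring
  have h2 : ‖v - q‖ ^ 2 ≤ ‖v - (q + t • (r - q))‖ ^ 2 :=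
    pow_le_pow_left₀ (norm_nonneg _) hle 2
  have ht2 : t ≤ c / ‖r - q‖ ^ 2 := min_le_right _ _
  have ht3 : t * ‖r - q‖ ^ 2 ≤ c := by
    rw [← le_div_iff₀ hn]; exact ht2
  nlinarith [mul_pos htpos hc]

/-- Uniqueness of points satisfying the variational inequality. -/
lemma vi_unique {v q q' : E}
    (h1 : ⟪v - q, q' - q⟫ ≤ 0) (h2 : ⟪v - q', q - q'⟫ ≤ 0) : q = q' := by
  have e : ⟪v - q, q' - q⟫ + ⟪v - q', q - q'⟫ = ⟪q' - q, q' - q⟫ := by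
    have h3 : (q : E) - q' = -(q' - q) := by abel
    rw [h3, inner_neg_right, ← sub_eq_add_neg, ← inner_sub_left]
    congr 1
    abel
  have h4 : ⟪(q' : E) - q, q' - q⟫ ≤ 0 := by linarith
  have h5 : (q' : E) - q = 0 := real_inner_self_nonpos.mp h4
  have := sub_eq_zero.mp h5
  exact this.symm

end AuxVI

/-- Points of a segment between two points of the expanded core lie in the expanded core. -/
lemma seg_mem_expandedK (S : StarSetting) {x y : EuclideanSpace ℝ S.Idx}
    (hx : x ∈ S.expandedK) (hy : y ∈ S.expandedK) {t : ℝ} (ht0 : 0 ≤ t) (ht1 : t ≤ 1) :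
    x + t • (y - x) ∈ S.expandedK := by
  obtain ⟨hx1, hx2, hx3⟩ := hx
  obtain ⟨hy1, hy2, hy3⟩ := hy
  have hc : ∀ i : S.Idx, (x + t • (y - x)) i = x i + t * (y i - x i) := fun i => rfl
  refine ⟨fun j => ?_, fun j k => ?_, ?_⟩
  · have hs : ∑ k, (x + t • (y - x)) (some ⟨j, k⟩)
        = (∑ k, x (some ⟨j, k⟩)) + t * ((∑ k, y (some ⟨j, k⟩)) - ∑ k, x (some ⟨j, k⟩)) := by
      simp only [hc]
      rw [Finset.sum_add_distrib, ← Finset.mul_sum, Finset.sum_sub_distrib]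
    rw [hs, hc]
    nlinarith [hx1 j, hy1 j]
  · constructor
    · rw [hc]
      nlinarith [(hx2 j k).1, (hy2 j k).1]
    · rw [hc]
      nlinarith [(hx2 j k).2, (hy2 j k).2]
  · rw [hc]
    nlinarith [hx3, hy3]

lemma coreK_subset_expandedK (S : StarSetting) (θ : ℝ) {x : EuclideanSpace ℝ S.Idx}
    (hx : x ∈ S.coreK θ) : x ∈ S.expandedK :=
  ⟨hx.1, hx.2.1, hx.2.2.1⟩

/-- `p_{0,θ} = min { v_0 + θ, p̃_{0,θ} }`, where `p_θ` is the projection of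
the Vikrey vector onto the core and `p̃_θ` its projection onto the expanded core. -/
theorem core_proj_eq_min_expanded (S : StarSetting) (θ : ℝ) (hθ : 0 ≤ θ)
    (p pe : EuclideanSpace ℝ S.Idx)
    (hp : IsProjOn (S.coreK θ) (S.vick θ) p)
    (hpe : IsProjOn S.expandedK (S.vick θ) pe) :
    p none = min (S.v0 + θ) (pe none) := by
  classical
  obtain ⟨hpK, hpmin⟩ := hp
  obtain ⟨hpeK, hpemin⟩ := hpe
  set v := S.vick θ with hv
  have hpE : p ∈ S.expandedK := coreK_subset_expandedK S θ hpK
  have hp0 : p none ≤ S.v0 + θ := hpK.2.2.2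
  -- VI for pe over the expanded core, at the direction `p` (needed in both cases)
  have vi_pe : ⟪v - pe, p - pe⟫ ≤ 0 := by
    refine vi_of_small_t ⟨1, one_pos, fun t ht ht1 => ?_⟩
    exact hpemin _ (seg_mem_expandedK S hpeK hpE ht.le ht1)
  by_cases hcase : pe none ≤ S.v0 + θ
  · -- then `pe ∈ coreK θ` and `pe` also projects onto `coreK θ`; uniqueness gives `p = pe`
    have hpeC : pe ∈ S.coreK θ := ⟨hpeK.1, hpeK.2.1, hpeK.2.2, hcase⟩
    have vi_p : ⟪v - p, pe - p⟫ ≤ 0 := by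
      refine vi_of_small_t ⟨1, one_pos, fun t ht ht1 => ?_⟩
      have hmem : p + t • (pe - p) ∈ S.coreK θ := by
        have hE := seg_mem_expandedK S hpE hpeK ht.le ht1
        refine ⟨hE.1, hE.2.1, hE.2.2, ?_⟩
        have hc : (p + t • (pe - p)) none = p none + t * (pe none - p none) := rfl
        rw [hc]
        nlinarith
      exact hpmin _ hmem
    have hppe : p = pe := vi_unique vi_p vi_pe
    rw [hppe, min_eq_right hcase]
  · -- then `p none = v0 + θ`
    push_neg at hcase
    rw [min_eq_left hcase.le]
    by_contra hne
    have hplt : p none < S.v0 + θ := lt_of_le_of_ne hp0 hne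
    -- the constraint is inactive, so `p` satisfies the VI over the expanded core at `pe`
    have vi_p : ⟪v - p, pe - p⟫ ≤ 0 := by
      set δ := S.v0 + θ - p none with hδ
      have hδpos : 0 < δ := by simp [hδ]; linarith
      set M := |pe none - p none| + 1 with hM
      have hMpos : 0 < M := by positivity
      refine vi_of_small_t ⟨min 1 (δ / M), lt_min one_pos (by positivity), fun t ht ht1 => ?_⟩
      have ht1' : t ≤ 1 := ht1.trans (min_le_left _ _)
      have ht2 : t ≤ δ / M := ht1.trans (min_le_right _ _)
      have htM : t * M ≤ δ := by
        rw [← le_div_iff₀ hMpos]; exact ht2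
      have hmem : p + t • (pe - p) ∈ S.coreK θ := by
        have hE := seg_mem_expandedK S hpE hpeK ht.le ht1'
        refine ⟨hE.1, hE.2.1, hE.2.2, ?_⟩
        have hc : (p + t • (pe - p)) none = p none + t * (pe none - p none) := rfl
        rw [hc]
        have habs : pe none - p none ≤ M := by
          rw [hM]; linarith [le_abs_self (pe none - p none)]
        nlinarith
      exact hpmin _ hmem
    have hppe : p = pe := vi_unique vi_p vi_pe
    rw [hppe] at hplt
    linarith
end

section
/- In the star network setting, if θ ≥ 0 and (p̃, λ) satisfies the KKT conditions at θ, then λ_j < max_{1≤k≤n_j} Δ_{j,k} for every j ∈ {1,…,J}. -/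
/-- if `(p̃, λ)` satisfies the KKT conditions at `θ ≥ 0`, then
`λ_j < max_k Δ_{j,k}` for every `j`. -/
theorem kkt_lam_lt_maxDelta (S : StarSetting) (θ : ℝ) (hθ : 0 ≤ θ)
    (p : EuclideanSpace ℝ S.Idx) (lam : Fin S.J → ℝ)
    (h : S.KKT θ p lam) :
    ∀ j, lam j < S.Δmax j := by
  obtain ⟨hlam, hp0, hpk, hineq, heq⟩ := h
  intro j
  by_contra hle
  push_neg at hle
  have hΔpos : 0 < S.Δmax j := by
    obtain ⟨k, hk⟩ := S.h_pos j
    calc (0:ℝ) < S.Δ j k := by simp [StarSetting.Δ, sub_pos, hk]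
    _ ≤ S.Δmax j := Finset.le_sup' _ (Finset.mem_univ k)
  have hlamj : 0 < lam j := lt_of_lt_of_le hΔpos hle
  have hsum0 : ∑ k, max (min (S.η j + θ) (S.Δ j k) - lam j) 0 = 0 := by
    apply Finset.sum_eq_zero
    intro k _
    have h1 : S.Δ j k ≤ lam j :=
      le_trans (Finset.le_sup' _ (Finset.mem_univ k)) hle
    have h2 : min (S.η j + θ) (S.Δ j k) - lam j ≤ 0 := by
      have := min_le_right (S.η j + θ) (S.Δ j k); linarith
    exact max_eq_right h2
  have hη : 0 ≤ S.η j := by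
    have h3 : S.C j - ∑ k, S.b j k ≤ S.v0 := by
      unfold StarSetting.v0
      exact le_trans (Finset.le_sup' (fun j => S.C j - ∑ k, S.b j k)
        (Finset.mem_univ j)) (le_max_right _ _)
    unfold StarSetting.η; linarith
  have hsumlam : 0 < ∑ i, lam i :=
    Finset.sum_pos' (fun i _ => hlam i) ⟨j, Finset.mem_univ j, hlamj⟩
  have := heq j hlamj
  rw [hsum0] at this
  linarith
end

section
/- In the star network setting, letting λ_{j,θ} denote the (unique) Lagrange multipliers satisfying the KKT conditions at θ and σ_θ := Σ_{j=1}^J λ_{j,θ}: if θ > 0 and σ_θ ≤ θ, then the right-hand slope of σ at θ is at most one, i.e., there exists ε > 0 such that for all θ' with θ ≤ θ' ≤ θ + ε, σ_{θ'} − σ_θ ≤ θ' − θ. -/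
/-- positive part is subadditive -/
lemma pos_part_add (x y : ℝ) : max (x + y) 0 ≤ max x 0 + max y 0 :=
  max_le (add_le_add (le_max_left x 0) (le_max_left y 0))
    (add_nonneg (le_max_right x 0) (le_max_right y 0))

set_option maxHeartbeats 2000000 in
lemma aux_slope {J : ℕ} (hJ : 0 < J) {n : Fin J → ℕ} (hn : ∀ j, 0 < n j)
    (η : Fin J → ℝ) (Δ : (j : Fin J) → Fin (n j) → ℝ)
    (lam lam' : Fin J → ℝ) (θ θ' : ℝ)
    (hη : ∀ j, 0 ≤ η j)
    (hl : ∀ j, 0 ≤ lam j) (hl' : ∀ j, 0 ≤ lam' j)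
    (h4 : ∀ j, ∑ k, max (min (η j + θ) (Δ j k) - lam j) 0 ≤ (∑ i, lam i) + η j)
    (h5 : ∀ j, 0 < lam j → (∑ i, lam i) + η j = ∑ k, max (min (η j + θ) (Δ j k) - lam j) 0)
    (h4' : ∀ j, ∑ k, max (min (η j + θ') (Δ j k) - lam' j) 0 ≤ (∑ i, lam' i) + η j)
    (h5' : ∀ j, 0 < lam' j → (∑ i, lam' i) + η j = ∑ k, max (min (η j + θ') (Δ j k) - lam' j) 0)
    (hθ : 0 < θ) (hσθ : ∑ i, lam i ≤ θ) (hδ : θ < θ')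
    (P1 : ∀ j k, η j + θ < Δ j k → η j + θ' ≤ Δ j k)
    (P3 : ∀ j, η j + θ < lam j → η j + θ + ((J : ℝ) + 1) * (θ' - θ) ≤ lam j) :
    (∑ i, lam' i) - (∑ i, lam i) ≤ θ' - θ := by
  classical
  by_contra hρ
  push_neg at hρ
  set σ := ∑ i, lam i with hσdef
  set σ' := ∑ i, lam' i with hσ'def
  set δ := θ' - θ with hδdef
  have hδ0 : 0 < δ := sub_pos.mpr hδ
  have hσ0 : 0 ≤ σ := Finset.sum_nonneg fun i _ => hl i
  have hσ'0 : 0 ≤ σ' := Finset.sum_nonneg fun i _ => hl' i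
  have hσσ' : σ < σ' := by linarith
  -- S2 : lam' j ≤ lam j + δ
  have hS2 : ∀ j, lam' j ≤ lam j + δ := by
    intro j
    by_contra hc
    push_neg at hc
    have hpos : 0 < lam' j := lt_of_le_of_lt (by linarith [hl j] : (0:ℝ) ≤ lam j + δ) hc
    have e' := h5' j hpos
    have hterm : ∀ k, max (min (η j + θ') (Δ j k) - lam' j) 0
        ≤ max (min (η j + θ) (Δ j k) - lam j) 0 := by
      intro k
      refine max_le_max ?_ le_rfl
      rcases le_total (η j + θ) (Δ j k) with h | h
      · have h2 : min (η j + θ') (Δ j k) ≤ η j + θ' := min_le_left _ _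
        rw [min_eq_left h]; linarith
      · have h2 : min (η j + θ') (Δ j k) ≤ Δ j k := min_le_right _ _
        rw [min_eq_right h]; linarith
    have : σ' + η j ≤ σ + η j :=
      e' ▸ le_trans (Finset.sum_le_sum fun k _ => hterm k) (h4 j)
    linarith
  have hσJ : σ' ≤ σ + (J : ℝ) * δ := by
    have h1 : σ' ≤ ∑ j, (lam j + δ) := Finset.sum_le_sum fun j _ => hS2 j
    have h2 : ∑ j : Fin J, (lam j + δ) = σ + (J : ℝ) * δ := by
      rw [Finset.sum_add_distrib, Finset.sum_const, Finset.card_univ, Fintype.card_fin,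
        nsmul_eq_mul]
    linarith
  -- S3 : lam j - lam' j ≤ σ' - σ
  have hS3 : ∀ j, lam j - lam' j ≤ σ' - σ := by
    intro j
    rcases le_or_gt (lam j) (lam' j) with h | h
    · linarith
    · have hlj : 0 < lam j := lt_of_le_of_lt (hl' j) h
      have e := h5 j hlj
      have hσj : lam j ≤ σ := Finset.single_le_sum (fun i _ => hl i) (Finset.mem_univ j)
      have hgpos : 0 < ∑ k, max (min (η j + θ) (Δ j k) - lam j) 0 := by
        rw [← e]; linarith [hη j]
      have hx : ∃ k, 0 < max (min (η j + θ) (Δ j k) - lam j) 0 := by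
        by_contra hall; push_neg at hall
        have : ∑ k, max (min (η j + θ) (Δ j k) - lam j) 0 ≤ 0 :=
          Finset.sum_nonpos fun k _ => hall k
        linarith
      obtain ⟨k₀, hk₀⟩ := hx
      have hin : 0 < min (η j + θ) (Δ j k₀) - lam j := by
        by_contra hno; push_neg at hno
        rw [max_eq_right hno] at hk₀
        exact lt_irrefl _ hk₀
      have step1 : (∑ k, max (min (η j + θ) (Δ j k) - lam j) 0) + (lam j - lam' j)
          ≤ ∑ k, max (min (η j + θ) (Δ j k) - lam' j) 0 := by
        have key : ∀ k ∈ Finset.univ, max (min (η j + θ) (Δ j k) - lam j) 0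
            + (if k = k₀ then lam j - lam' j else 0)
            ≤ max (min (η j + θ) (Δ j k) - lam' j) 0 := by
          intro k _
          by_cases hk : k = k₀
          · subst hk
            rw [if_pos rfl, max_eq_left hin.le]
            have : min (η j + θ) (Δ j k) - lam j + (lam j - lam' j)
                = min (η j + θ) (Δ j k) - lam' j := by ring
            rw [this]
            exact le_max_left _ _
          · rw [if_neg hk, add_zero]
            exact max_le_max (by linarith) le_rfl
        calc (∑ k, max (min (η j + θ) (Δ j k) - lam j) 0) + (lam j - lam' j)
            = ∑ k, (max (min (η j + θ) (Δ j k) - lam j) 0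
              + (if k = k₀ then lam j - lam' j else 0)) := by
              rw [Finset.sum_add_distrib, Finset.sum_ite_eq' Finset.univ k₀
                (fun _ => lam j - lam' j), if_pos (Finset.mem_univ k₀)]
          _ ≤ _ := Finset.sum_le_sum key
      have step2 : (∑ k, max (min (η j + θ) (Δ j k) - lam' j) 0)
          ≤ ∑ k, max (min (η j + θ') (Δ j k) - lam' j) 0 := by
        refine Finset.sum_le_sum fun k _ => max_le_max ?_ le_rfl
        have : min (η j + θ) (Δ j k) ≤ min (η j + θ') (Δ j k) :=
          min_le_min (by linarith) le_rfl
        linarith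
      have := h4' j
      linarith
  clear_value σ σ' δ
  -- the unsaturated index sets
  set U : (j : Fin J) → Finset (Fin (n j)) :=
    fun j => Finset.univ.filter (fun k => η j + θ < Δ j k) with hUdef
  have hsplitθ : ∀ (j : Fin J) (μ : ℝ), (∑ k, max (min (η j + θ) (Δ j k) - μ) 0)
      = (∑ _k ∈ U j, max (η j + θ - μ) 0)
        + ∑ k ∈ Finset.univ.filter (fun k => ¬ (η j + θ < Δ j k)), max (Δ j k - μ) 0 := by
    intro j μ
    rw [← Finset.sum_filter_add_sum_filter_not Finset.univ (fun k => η j + θ < Δ j k)]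
    congr 1
    refine Finset.sum_congr rfl fun k hk => ?_
    rw [Finset.mem_filter] at hk
    rw [min_eq_left (le_of_lt hk.2)]
    refine Finset.sum_congr rfl fun k hk => ?_
    rw [Finset.mem_filter] at hk
    rw [min_eq_right (not_lt.mp hk.2)]
  have hsplitθ' : ∀ (j : Fin J) (μ : ℝ), (∑ k, max (min (η j + θ') (Δ j k) - μ) 0)
      = (∑ _k ∈ U j, max (η j + θ' - μ) 0)
        + ∑ k ∈ Finset.univ.filter (fun k => ¬ (η j + θ < Δ j k)), max (Δ j k - μ) 0 := by
    intro j μ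
    rw [← Finset.sum_filter_add_sum_filter_not Finset.univ (fun k => η j + θ < Δ j k)]
    congr 1
    refine Finset.sum_congr rfl fun k hk => ?_
    rw [Finset.mem_filter] at hk
    rw [min_eq_left (P1 j k hk.2)]
    refine Finset.sum_congr rfl fun k hk => ?_
    rw [Finset.mem_filter] at hk
    rw [min_eq_right (by linarith [not_lt.mp hk.2])]
  -- the set B of "doubly unsaturated" arms
  set B : Finset (Fin J) := Finset.univ.filter
    (fun j => 0 < lam' j ∧ lam j ≤ η j + θ ∧ 2 ≤ (U j).card) with hBdef
  have hmemB : ∀ j ∈ B, 0 < lam' j ∧ lam j ≤ η j + θ ∧ 2 ≤ (U j).card :=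
    fun j hj => (Finset.mem_filter.mp hj).2
  have hmemB' : ∀ j, (0 < lam' j ∧ lam j ≤ η j + θ ∧ 2 ≤ (U j).card) → j ∈ B :=
    fun j h => Finset.mem_filter.mpr ⟨Finset.mem_univ j, h⟩
  clear_value U B
  -- off B, positive lam' implies strict decrease
  have hoffB : ∀ j, j ∉ B → 0 < lam' j → lam' j < lam j := by
    intro j hj hpos
    have hj' : ¬ (0 < lam' j ∧ lam j ≤ η j + θ ∧ 2 ≤ (U j).card) := by
      intro hcon
      exact hj (hmemB' j hcon)
    rcases le_or_gt (lam j) (η j + θ) with hle | hgt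
    · -- D3b : at most one unsaturated item
      have hu1 : (U j).card ≤ 1 := by
        by_contra hc
        exact hj' ⟨hpos, hle, by omega⟩
      have e' := h5' j hpos
      rw [hsplitθ' j (lam' j)] at e'
      set d := lam j - lam' j with hd
      have hb1 : max (η j + θ' - lam' j) 0 ≤ max (η j + θ - lam j) 0 + (δ + max d 0) := by
        have h1 : η j + θ' - lam' j = (η j + θ - lam j) + (δ + d) := by
          rw [hδdef]; ring
        rw [h1]
        refine le_trans (pos_part_add _ _) ?_
        have : max (δ + d) 0 ≤ δ + max d 0 := by
          refine le_trans (pos_part_add _ _) ?_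
          rw [max_eq_left hδ0.le]
        linarith
      have hb2 : ∀ k, max (Δ j k - lam' j) 0 ≤ max (Δ j k - lam j) 0 + max d 0 := by
        intro k
        have h1 : Δ j k - lam' j = (Δ j k - lam j) + d := by ring
        rw [h1]; exact pos_part_add _ _
      have hG : (∑ _k ∈ U j, max (η j + θ - lam j) 0)
          + (∑ k ∈ Finset.univ.filter (fun k => ¬ (η j + θ < Δ j k)),
            max (Δ j k - lam j) 0) ≤ σ + η j := by
        rw [← hsplitθ j (lam j)]; exact h4 j
      have s1 : (∑ _k ∈ U j, max (η j + θ' - lam' j) 0)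
          ≤ (∑ _k ∈ U j, max (η j + θ - lam j) 0) + (δ + max d 0) := by
        rcases Finset.eq_empty_or_nonempty (U j) with he | hne
        · rw [he]; simp
          positivity
        · calc (∑ _k ∈ U j, max (η j + θ' - lam' j) 0)
              ≤ ∑ _k ∈ U j, (max (η j + θ - lam j) 0 + (δ + max d 0)) :=
                Finset.sum_le_sum fun k _ => hb1
            _ = (∑ _k ∈ U j, max (η j + θ - lam j) 0) + (U j).card * (δ + max d 0) := by
                simp [Finset.sum_add_distrib, Finset.sum_const, nsmul_eq_mul, mul_add]
            _ ≤ _ := by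
                have hc : ((U j).card : ℝ) ≤ 1 := by exact_mod_cast hu1
                nlinarith [le_max_right d (0:ℝ)]
      have s2 : (∑ k ∈ Finset.univ.filter (fun k => ¬ (η j + θ < Δ j k)),
            max (Δ j k - lam' j) 0)
          ≤ (∑ k ∈ Finset.univ.filter (fun k => ¬ (η j + θ < Δ j k)),
            max (Δ j k - lam j) 0) + (n j : ℝ) * max d 0 := by
        calc (∑ k ∈ Finset.univ.filter (fun k => ¬ (η j + θ < Δ j k)), max (Δ j k - lam' j) 0)
            ≤ ∑ k ∈ Finset.univ.filter (fun k => ¬ (η j + θ < Δ j k)),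
              (max (Δ j k - lam j) 0 + max d 0) := Finset.sum_le_sum fun k _ => hb2 k
          _ = (∑ k ∈ Finset.univ.filter (fun k => ¬ (η j + θ < Δ j k)), max (Δ j k - lam j) 0)
              + (Finset.univ.filter (fun k => ¬ (η j + θ < Δ j k))).card * max d 0 := by
              simp [Finset.sum_add_distrib, Finset.sum_const, nsmul_eq_mul, mul_add]
          _ ≤ _ := by
              have hc : ((Finset.univ.filter (fun k => ¬ (η j + θ < Δ j k))).card : ℝ)
                  ≤ (n j : ℝ) := by
                have := Finset.card_filter_le Finset.univ (fun k => ¬ (η j + θ < Δ j k))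
                rw [Finset.card_univ, Fintype.card_fin] at this
                exact_mod_cast this
              nlinarith [le_max_right d (0:ℝ)]
      have key : σ' + η j ≤ σ + η j + δ + ((n j : ℝ) + 1) * max d 0 := by
        rw [e']; linarith [s1, s2, hG]
      have hdpos : 0 < max d 0 := by
        by_contra hc
        push_neg at hc
        have : max d 0 = 0 := le_antisymm hc (le_max_right _ _)
        rw [this] at key
        simp at key
        linarith
      have : 0 < d := by
        by_contra hc
        push_neg at hc
        rw [max_eq_right hc] at hdpos
        exact lt_irrefl _ hdpos
      linarith [this]
    · -- D3a : impossible
      exfalso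
      have e' := h5' j hpos
      have hall : ∀ k, max (min (η j + θ') (Δ j k) - lam' j) 0 ≤ 0 := by
        intro k
        have h1 : min (η j + θ') (Δ j k) ≤ η j + θ' := min_le_left _ _
        have h2 := hS3 j
        have h3 := P3 j hgt
        have hJ1 : (1 : ℝ) ≤ (J : ℝ) := by exact_mod_cast hJ
        refine max_le (by linarith) le_rfl
      have hsum : (∑ k, max (min (η j + θ') (Δ j k) - lam' j) 0) ≤ 0 :=
        Finset.sum_nonpos fun k _ => hall k
      have hσ'j : lam' j ≤ σ' := by
        rw [hσ'def]
        exact Finset.single_le_sum (fun i _ => hl' i) (Finset.mem_univ j)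
      rw [← e'] at hsum
      linarith [hη j]
  -- D5 : the increase is concentrated on B
  have hD5 : σ' - σ ≤ ∑ j ∈ B, (lam' j - lam j) := by
    have hsd := Finset.sum_sdiff (Finset.subset_univ B) (f := fun j => lam' j - lam j)
    have hnp : (∑ j ∈ Finset.univ \ B, (lam' j - lam j)) ≤ 0 := by
      refine Finset.sum_nonpos fun j hj => ?_
      have hj' : j ∉ B := (Finset.mem_sdiff.mp hj).2
      rcases le_or_gt (lam' j) 0 with h | h
      · linarith [hl j]
      · linarith [hoffB j hj' h]
    have hsum : (∑ j, (lam' j - lam j)) = σ' - σ := by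
      rw [Finset.sum_sub_distrib, ← hσdef, ← hσ'def]
    linarith [hsd, hnp, hsum]
  have hBδ : (∑ j ∈ B, (lam' j - lam j)) ≤ (B.card : ℝ) * δ := by
    calc (∑ j ∈ B, (lam' j - lam j)) ≤ ∑ _j ∈ B, δ :=
          Finset.sum_le_sum fun j _ => by linarith [hS2 j]
      _ = (B.card : ℝ) * δ := by rw [Finset.sum_const, nsmul_eq_mul]
  have hb2 : 2 ≤ B.card := by
    by_contra hc
    push_neg at hc
    have hc1 : (B.card : ℝ) ≤ 1 := by exact_mod_cast Nat.lt_succ_iff.mp hc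
    nlinarith [hD5, hBδ, hδ0]
  -- D7' : lower bound on lam j for j ∈ B
  have hD7' : ∀ j ∈ B, 2 * θ + η j - σ ≤ 2 * lam j := by
    intro j hj
    obtain ⟨hpos', hle, hu⟩ := hmemB j hj
    have hu' : (2 : ℝ) ≤ ((U j).card : ℝ) := by exact_mod_cast hu
    have h := h4 j
    rw [hsplitθ j (lam j)] at h
    have h1 : (∑ _k ∈ U j, max (η j + θ - lam j) 0)
        = ((U j).card : ℝ) * (η j + θ - lam j) := by
      rw [Finset.sum_const, nsmul_eq_mul, max_eq_left (by linarith)]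
    have h2 : 0 ≤ ∑ k ∈ Finset.univ.filter (fun k => ¬ (η j + θ < Δ j k)),
        max (Δ j k - lam j) 0 := Finset.sum_nonneg fun k _ => le_max_right _ _
    have hD7 : ((U j).card : ℝ) * (η j + θ - lam j) ≤ σ + η j := by
      rw [h1] at h; linarith
    by_contra hgoal
    push_neg at hgoal
    have hp : 0 < η j + θ - lam j := by linarith [hη j, hσ0]
    have hmul := mul_le_mul_of_nonneg_right hu' hp.le
    linarith [hD7, hη j, hσ0]
  -- summing over B
  have hσB : (∑ j ∈ B, lam j) ≤ σ := by
    rw [hσdef]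
    exact Finset.sum_le_sum_of_subset_of_nonneg (Finset.subset_univ B) (fun j _ _ => hl j)
  have hsum8 : (∑ j ∈ B, (2 * θ + η j - σ)) ≤ ∑ j ∈ B, 2 * lam j := Finset.sum_le_sum hD7'
  have hsplit8 : (∑ j ∈ B, (2 * θ + η j - σ))
      = (B.card : ℝ) * (2 * θ - σ) + ∑ j ∈ B, η j := by
    have hfun : ∀ j ∈ B, 2 * θ + η j - σ = (2 * θ - σ) + η j := fun j _ => by ring
    rw [Finset.sum_congr rfl hfun, Finset.sum_add_distrib, Finset.sum_const, nsmul_eq_mul]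
  have h2s : (∑ j ∈ B, 2 * lam j) = 2 * ∑ j ∈ B, lam j := by rw [Finset.mul_sum]
  have hH0 : 0 ≤ ∑ j ∈ B, η j := Finset.sum_nonneg fun j _ => hη j
  have hbR : (2 : ℝ) ≤ (B.card : ℝ) := by exact_mod_cast hb2
  have hkey8 : (B.card : ℝ) * (2 * θ - σ) + (∑ j ∈ B, η j) ≤ 2 * σ := by
    rw [hsplit8, h2s] at hsum8
    linarith [hσB]
  have hcard2 : 2 * (2 * θ - σ) ≤ (B.card : ℝ) * (2 * θ - σ) := by
    have h0 : 0 ≤ 2 * θ - σ := by linarith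
    exact mul_le_mul_of_nonneg_right hbR h0
  have hHeq : (∑ j ∈ B, η j) = 0 := le_antisymm (by linarith) hH0
  have hσeq : σ = θ := le_antisymm hσθ (by linarith)
  have hbcard : B.card = 2 := by
    have hle2 : (B.card : ℝ) ≤ 2 := by
      rw [hσeq, hHeq] at hkey8
      have hx : (B.card : ℝ) * (2 * θ - θ) = (B.card : ℝ) * θ := by ring
      have h1 : (B.card : ℝ) * θ ≤ 2 * θ := by linarith [hkey8, hx]
      exact le_of_mul_le_mul_right h1 hθ
    exact_mod_cast le_antisymm hle2 hbR
  have hηB : ∀ j ∈ B, η j = 0 := by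
    intro j hj
    exact (Finset.sum_eq_zero_iff_of_nonneg fun i _ => hη i).mp hHeq j hj
  -- D9 : lam j = θ/2 on B, 0 off B
  have hD9lb : ∀ j ∈ B, θ / 2 ≤ lam j := by
    intro j hj
    have h := hD7' j hj
    have h0 := hηB j hj
    linarith [hσeq]
  have hsumBlam : (∑ j ∈ B, lam j) = θ := by
    have hge : θ ≤ ∑ j ∈ B, lam j := by
      calc θ = ∑ _j ∈ B, θ / 2 := by
            rw [Finset.sum_const, nsmul_eq_mul, hbcard]; push_cast; ring
        _ ≤ _ := Finset.sum_le_sum hD9lb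
    linarith [hσB, hσeq]
  have hD9 : ∀ j ∈ B, lam j = θ / 2 := by
    intro j hj
    by_contra hne2
    have hlt : θ / 2 < lam j := lt_of_le_of_ne (hD9lb j hj) (Ne.symm hne2)
    have hstrict : (∑ _j ∈ B, θ / 2) < ∑ j ∈ B, lam j :=
      Finset.sum_lt_sum hD9lb ⟨j, hj, hlt⟩
    have : (∑ _j ∈ B, θ / 2 : ℝ) = θ := by
      rw [Finset.sum_const, nsmul_eq_mul, hbcard]; push_cast; ring
    linarith [hsumBlam]
  have hlam0 : ∀ j, j ∉ B → lam j = 0 := by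
    intro j hj
    have hsd := Finset.sum_sdiff (Finset.subset_univ B) (f := lam)
    have hz : (∑ i ∈ Finset.univ \ B, lam i) = 0 := by
      have : (∑ i ∈ Finset.univ \ B, lam i) + θ = σ := by
        rw [← hsumBlam, hσdef]; exact hsd
      linarith [hσeq]
    exact (Finset.sum_eq_zero_iff_of_nonneg fun i _ => hl i).mp hz j
      (Finset.mem_sdiff.mpr ⟨Finset.mem_univ j, hj⟩)
  -- D9b : exactly two unsaturated items and small saturated bids on B
  have hD9b : ∀ j ∈ B, (U j).card = 2 ∧
      ∀ k ∈ Finset.univ.filter (fun k => ¬ (η j + θ < Δ j k)), Δ j k ≤ θ / 2 := by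
    intro j hj
    have hlamj : lam j = θ / 2 := hD9 j hj
    have hlampos : 0 < lam j := by rw [hlamj]; linarith
    have e := h5 j hlampos
    rw [hsplitθ j (lam j)] at e
    have hη0 : η j = 0 := hηB j hj
    have h1 : (∑ _k ∈ U j, max (η j + θ - lam j) 0) = ((U j).card : ℝ) * (θ / 2) := by
      rw [Finset.sum_const, nsmul_eq_mul]
      congr 1
      rw [hη0, hlamj, max_eq_left (by linarith)]
      ring
    rw [h1] at e
    have hR0 : 0 ≤ ∑ k ∈ Finset.univ.filter (fun k => ¬ (η j + θ < Δ j k)),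
        max (Δ j k - lam j) 0 := Finset.sum_nonneg fun k _ => le_max_right _ _
    have hu' : (2 : ℝ) ≤ ((U j).card : ℝ) := by exact_mod_cast (hmemB j hj).2.2
    -- e : σ + η j = cardU * (θ/2) + R
    have hmul : 2 * (θ / 2) ≤ ((U j).card : ℝ) * (θ / 2) :=
      mul_le_mul_of_nonneg_right hu' (by linarith)
    have hRz : (∑ k ∈ Finset.univ.filter (fun k => ¬ (η j + θ < Δ j k)),
        max (Δ j k - lam j) 0) = 0 :=
      le_antisymm (by linarith [hσeq, e, hmul, hη0]) hR0
    have hcardU : (U j).card = 2 := by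
      have h2 : ((U j).card : ℝ) * (θ / 2) = 2 * (θ / 2) := by
        rw [hRz] at e; linarith [hσeq]
      have := mul_right_cancel₀ (ne_of_gt (by linarith : (0:ℝ) < θ / 2)) h2
      exact_mod_cast this
    refine ⟨hcardU, fun k hk => ?_⟩
    have hz := (Finset.sum_eq_zero_iff_of_nonneg fun k _ => le_max_right _ _).mp hRz k hk
    have hle0 : Δ j k - lam j ≤ 0 := by
      have h := le_max_left (Δ j k - lam j) (0:ℝ)
      rw [hz] at h; exact h
    linarith [hlamj]
  -- D11/D12 : exact value of lam' on B and conclusion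
  have hlam'0 : ∀ j, j ∉ B → lam' j = 0 := by
    intro j hj
    by_contra hne2
    have hpos : 0 < lam' j := lt_of_le_of_ne (hl' j) (Ne.symm hne2)
    have h := hoffB j hj hpos
    rw [hlam0 j hj] at h
    linarith
  have hD5' : σ' - σ ≤ 2 * δ := by
    have h := hBδ
    rw [hbcard] at h
    push_cast at h
    linarith [hD5]
  have hD11 : ∀ j ∈ B, 2 * lam' j = 2 * θ' - σ' := by
    intro j hj
    obtain ⟨hpos', hle, -⟩ := hmemB j hj
    have hη0 : η j = 0 := hηB j hj
    have hcU : (U j).card = 2 := (hD9b j hj).1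
    have e' := h5' j hpos'
    rw [hsplitθ' j (lam' j)] at e'
    have hlam'le : lam' j ≤ θ' := by
      have h := hS2 j
      rw [hD9 j hj] at h
      linarith
    have h1 : (∑ _k ∈ U j, max (η j + θ' - lam' j) 0) = 2 * (θ' - lam' j) := by
      rw [Finset.sum_const, nsmul_eq_mul, hcU, hη0, max_eq_left (by linarith)]
      push_cast; ring
    rw [h1] at e'
    have hR'0 : 0 ≤ ∑ k ∈ Finset.univ.filter (fun k => ¬ (η j + θ < Δ j k)),
        max (Δ j k - lam' j) 0 := Finset.sum_nonneg fun k _ => le_max_right _ _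
    have hlam'lb : θ / 2 ≤ lam' j := by linarith [hσeq, hD5', e', hR'0, hη0, hδdef]
    have hR'z : (∑ k ∈ Finset.univ.filter (fun k => ¬ (η j + θ < Δ j k)),
        max (Δ j k - lam' j) 0) = 0 := by
      refine Finset.sum_eq_zero fun k hk => ?_
      have hΔ := (hD9b j hj).2 k hk
      exact max_eq_right (by linarith)
    rw [hR'z] at e'
    linarith [hη0]
  have hsum' : σ' = ∑ j ∈ B, lam' j := by
    have hsd := Finset.sum_sdiff (Finset.subset_univ B) (f := lam')
    have hz : (∑ j ∈ Finset.univ \ B, lam' j) = 0 :=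
      Finset.sum_eq_zero fun j hj => hlam'0 j (Finset.mem_sdiff.mp hj).2
    rw [hz, zero_add] at hsd
    rw [hσ'def]
    exact hsd.symm
  have hfin : 2 * σ' = ∑ j ∈ B, (2 * lam' j) := by
    rw [hsum', Finset.mul_sum]
  rw [Finset.sum_congr rfl hD11] at hfin
  have hfin2 : (∑ _j ∈ B, (2 * θ' - σ')) = 2 * (2 * θ' - σ') := by
    rw [Finset.sum_const, nsmul_eq_mul, hbcard]; push_cast; ring
  rw [hfin2] at hfin
  -- 2σ' = 2(2θ' - σ') ⇒ σ' = θ', contradicting δ < σ' - σ with σ = θ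
  have : σ' = θ' := by linarith
  rw [hσeq] at hρ
  linarith

/-- if `θ > 0` and `σ_θ ≤ θ`, then the right-hand slope of `σ` at `θ` is at
most one. -/
theorem kkt_sigma_right_slope_le_one (S : StarSetting)
    (lam : ℝ → Fin S.J → ℝ)
    (hlam : ∀ θ : ℝ, 0 ≤ θ → ∃ p : EuclideanSpace ℝ S.Idx, S.KKT θ p (lam θ))
    (θ : ℝ) (hθ : 0 < θ) (hσ : ∑ j, lam θ j ≤ θ) :
    ∃ ε : ℝ, 0 < ε ∧ ∀ θ' : ℝ, θ ≤ θ' → θ' ≤ θ + ε →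
      (∑ j, lam θ' j) - (∑ j, lam θ j) ≤ θ' - θ := by
  classical
  obtain ⟨p, hp⟩ := hlam θ hθ.le
  obtain ⟨hl, -, -, h4, h5⟩ := hp
  have hη : ∀ j, 0 ≤ S.η j := by
    intro j
    have h1 : S.C j - ∑ k, S.b j k ≤ S.v0 :=
      le_trans (Finset.le_sup' (f := fun j => S.C j - ∑ k, S.b j k)
        (Finset.mem_univ j)) (le_max_right _ _)
    unfold StarSetting.η
    linarith
  -- construct ε from the positive gaps
  set A1 : Finset ℝ := Finset.univ.image
    (fun jk : (j : Fin S.J) × Fin (S.n j) => S.Δ jk.1 jk.2 - (S.η jk.1 + θ)) with hA1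
  set A2 : Finset ℝ := Finset.univ.image
    (fun j : Fin S.J => lam θ j - (S.η j + θ)) with hA2
  have hTne : (insert (1:ℝ) ((A1 ∪ A2).filter (fun x => 0 < x))).Nonempty :=
    ⟨1, Finset.mem_insert_self _ _⟩
  set m := (insert (1:ℝ) ((A1 ∪ A2).filter (fun x => 0 < x))).min' hTne with hm
  have hmem : m ∈ insert (1:ℝ) ((A1 ∪ A2).filter (fun x => 0 < x)) :=
    Finset.min'_mem _ _
  have hmpos : 0 < m := by
    rcases Finset.mem_insert.mp hmem with h | h
    · rw [h]; norm_num
    · exact (Finset.mem_filter.mp h).2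
  have hJ1 : (1 : ℝ) ≤ (S.J : ℝ) + 1 := by
    have : (0:ℝ) ≤ (S.J : ℝ) := Nat.cast_nonneg _
    linarith
  refine ⟨m / ((S.J : ℝ) + 1), by positivity, ?_⟩
  intro θ' hθθ' hθ'ub
  rcases eq_or_lt_of_le hθθ' with heq | hlt
  · rw [← heq]; simp
  obtain ⟨p', hp'⟩ := hlam θ' (by linarith)
  obtain ⟨hl', -, -, h4', h5'⟩ := hp'
  have hgap : ∀ x ∈ (A1 ∪ A2), 0 < x → m ≤ x := fun x hx hxpos =>
    Finset.min'_le _ x (Finset.mem_insert.mpr (Or.inr (Finset.mem_filter.mpr ⟨hx, hxpos⟩)))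
  have hδm : θ' - θ ≤ m / ((S.J : ℝ) + 1) := by linarith
  have P1 : ∀ j k, S.η j + θ < S.Δ j k → S.η j + θ' ≤ S.Δ j k := by
    intro j k hjk
    have hx : S.Δ j k - (S.η j + θ) ∈ A1 ∪ A2 := by
      refine Finset.mem_union_left _ ?_
      rw [hA1]
      exact Finset.mem_image.mpr ⟨⟨j, k⟩, Finset.mem_univ _, rfl⟩
    have := hgap _ hx (by linarith)
    have hmm : m / ((S.J : ℝ) + 1) ≤ m := by
      rw [div_le_iff₀ (by linarith : (0:ℝ) < (S.J : ℝ) + 1)]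
      nlinarith
    linarith
  have P3 : ∀ j, S.η j + θ < lam θ j →
      S.η j + θ + ((S.J : ℝ) + 1) * (θ' - θ) ≤ lam θ j := by
    intro j hjk
    have hx : lam θ j - (S.η j + θ) ∈ A1 ∪ A2 := by
      refine Finset.mem_union_right _ ?_
      rw [hA2]
      exact Finset.mem_image.mpr ⟨j, Finset.mem_univ _, rfl⟩
    have h1 := hgap _ hx (by linarith)
    have h2 : ((S.J : ℝ) + 1) * (θ' - θ) ≤ m := by
      calc ((S.J : ℝ) + 1) * (θ' - θ) ≤ ((S.J : ℝ) + 1) * (m / ((S.J : ℝ) + 1)) := by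
            apply mul_le_mul_of_nonneg_left hδm (by linarith)
        _ = m := by field_simp
    linarith
  exact aux_slope S.hJ S.hn S.η S.Δ (lam θ) (lam θ') θ θ' hη hl hl' h4 h5 h4' h5'
    hθ hσ hlt P1 P3
end

section
/- Let J be a finite index set and θ > 0 a real number. For each j ∈ J let η_j ≥ 0 and λ_j ≥ 0 be reals with λ_j < η_j + θ, and let Δ_{j,1},…,Δ_{j,n_j} be reals. Set σ := Σ_{j∈J} λ_j, m_j := #{k : Δ_{j,k} > η_j + θ} and N_j := #{k : Δ_{j,k} > λ_j}, and assume N_j ≥ 1 for every j. If σ ≤ θ and for every j ∈ J, Σ_{k=1}^{n_j} max{ min{η_j + θ, Δ_{j,k}} − λ_j, 0 } ≤ σ + η_j, then Σ_{j∈J} m_j / N_j ≤ 1 + Σ_{j∈J} 1 / N_j. -/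
/-- the key counting estimate behind Lemma 3 of Abhishek–Hajek. With
`σ := Σ_j λ_j`, `m_j := #{k : Δ_{j,k} > η_j + θ}` and `N_j := #{k : Δ_{j,k} > λ_j}`,
if `σ ≤ θ` and `Σ_k max{min{η_j + θ, Δ_{j,k}} − λ_j, 0} ≤ σ + η_j` for all `j`, then
`Σ_j m_j / N_j ≤ 1 + Σ_j 1 / N_j`. -/
theorem counting_estimate {ι : Type*} [Fintype ι] (θ : ℝ) (hθ : 0 < θ)
    (n : ι → ℕ) (η lam : ι → ℝ) (Δ : (j : ι) → Fin (n j) → ℝ)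
    (hη : ∀ j, 0 ≤ η j) (hlam : ∀ j, 0 ≤ lam j) (hlt : ∀ j, lam j < η j + θ)
    (hN : ∀ j, 1 ≤ (Finset.univ.filter fun k => lam j < Δ j k).card)
    (hσ : ∑ j, lam j ≤ θ)
    (hsum : ∀ j, ∑ k, max (min (η j + θ) (Δ j k) - lam j) 0 ≤ (∑ i, lam i) + η j) :
    ∑ j, ((Finset.univ.filter fun k => η j + θ < Δ j k).card : ℝ) /
        ((Finset.univ.filter fun k => lam j < Δ j k).card : ℝ)
      ≤ 1 + ∑ j, 1 / ((Finset.univ.filter fun k => lam j < Δ j k).card : ℝ) := by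
  have key : ∀ j, ((Finset.univ.filter fun k => η j + θ < Δ j k).card : ℝ) /
      ((Finset.univ.filter fun k => lam j < Δ j k).card : ℝ)
      - 1 / ((Finset.univ.filter fun k => lam j < Δ j k).card : ℝ) ≤ lam j / θ := by
    intro j
    set M := (Finset.univ.filter fun k => η j + θ < Δ j k).card with hMdef
    set N := (Finset.univ.filter fun k => lam j < Δ j k).card with hNdef
    have hN1 : (1:ℝ) ≤ N := by exact_mod_cast hN j
    have hNpos : (0:ℝ) < N := lt_of_lt_of_le one_pos hN1
    have hMN : (M:ℝ) ≤ N := by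
      have hsub : (Finset.univ.filter fun k => η j + θ < Δ j k) ⊆
          (Finset.univ.filter fun k => lam j < Δ j k) := by
        intro k hk
        simp only [Finset.mem_filter] at *
        exact ⟨hk.1, lt_trans (hlt j) hk.2⟩
      exact_mod_cast Finset.card_le_card hsub
    rw [div_sub_div_same, div_le_div_iff₀ hNpos hθ]
    rcases Nat.eq_zero_or_pos M with h0 | hMpos
    · rw [h0]
      push_cast
      nlinarith [mul_nonneg (hlam j) hNpos.le]
    · have hM1 : (1:ℝ) ≤ M := by exact_mod_cast hMpos
      have hsum1 : (M:ℝ) * (η j + θ - lam j) ≤ (∑ i, lam i) + η j := by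
        have h1 : ∀ k ∈ (Finset.univ.filter fun k => η j + θ < Δ j k),
            η j + θ - lam j ≤ max (min (η j + θ) (Δ j k) - lam j) 0 := by
          intro k hk
          simp only [Finset.mem_filter] at hk
          rw [min_eq_left (le_of_lt hk.2)]
          exact le_max_left _ _
        calc (M:ℝ) * (η j + θ - lam j)
            = ∑ _k ∈ (Finset.univ.filter fun k => η j + θ < Δ j k), (η j + θ - lam j) := by
              rw [Finset.sum_const, nsmul_eq_mul]
          _ ≤ ∑ k ∈ (Finset.univ.filter fun k => η j + θ < Δ j k),
                max (min (η j + θ) (Δ j k) - lam j) 0 := Finset.sum_le_sum h1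
          _ ≤ ∑ k, max (min (η j + θ) (Δ j k) - lam j) 0 :=
              Finset.sum_le_sum_of_subset_of_nonneg (Finset.filter_subset _ _)
                (fun k _ _ => le_max_right _ _)
          _ ≤ (∑ i, lam i) + η j := hsum j
      nlinarith [mul_nonneg (hlam j) (by linarith : (0:ℝ) ≤ (N:ℝ) - M),
        mul_nonneg (by linarith : (0:ℝ) ≤ (M:ℝ) - 1) (hη j)]
  have hsumkey := Finset.sum_le_sum (fun j (_ : j ∈ Finset.univ) => key j)
  rw [Finset.sum_sub_distrib] at hsumkey
  have h2 : ∑ j, lam j / θ = (∑ j, lam j) / θ := by rw [Finset.sum_div]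
  have h3 : (∑ j, lam j) / θ ≤ 1 := by rw [div_le_one hθ]; exact hσ
  linarith
end

section
/- Fix θ ≥ 0, η ≥ 0, and reals Δ_1,…,Δ_n, and define g(l) := Σ_{k=1}^n max{ min{η + θ, Δ_k} − l, 0 } for l ∈ ℝ. Then for every s ≥ 0 with s + η > 0 there exists a unique l ≥ 0 such that s + η ≥ g(l) and (l > 0 implies s + η = g(l)); moreover, denoting this unique solution by φ(s), the function φ is nonincreasing on {s ≥ 0 : s + η > 0}: if 0 ≤ s ≤ s' and s + η > 0, then φ(s') ≤ φ(s). -/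
/-- with `g l := Σ_k max{min{η + θ, Δ_k} − l, 0}`, for every `s ≥ 0` with
`s + η > 0` there is a unique `l ≥ 0` with `g l ≤ s + η` and `(l > 0 → g l = s + η)`;
moreover this solution `φ(s)` is nonincreasing in `s`. -/
theorem phi_exists_unique_and_antitone (n : ℕ) (θ η : ℝ) (hθ : 0 ≤ θ) (hη : 0 ≤ η)
    (Δ : Fin n → ℝ) :
    (∀ s : ℝ, 0 ≤ s → 0 < s + η →
      ∃! l : ℝ, 0 ≤ l ∧ (∑ k, max (min (η + θ) (Δ k) - l) 0) ≤ s + η ∧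
        (0 < l → s + η = ∑ k, max (min (η + θ) (Δ k) - l) 0)) ∧
    (∀ s s' l l' : ℝ, 0 ≤ s → s ≤ s' → 0 < s + η →
      (0 ≤ l ∧ (∑ k, max (min (η + θ) (Δ k) - l) 0) ≤ s + η ∧
        (0 < l → s + η = ∑ k, max (min (η + θ) (Δ k) - l) 0)) →
      (0 ≤ l' ∧ (∑ k, max (min (η + θ) (Δ k) - l') 0) ≤ s' + η ∧
        (0 < l' → s' + η = ∑ k, max (min (η + θ) (Δ k) - l') 0)) →
      l' ≤ l) := by
  classical
  set g : ℝ → ℝ := fun l => ∑ k, max (min (η + θ) (Δ k) - l) 0 with hgdef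
  have hmono : ∀ ⦃a b : ℝ⦄, a ≤ b → g b ≤ g a := by
    intro a b hab
    apply Finset.sum_le_sum
    intro k _
    exact max_le_max (by linarith) le_rfl
  have hstrict : ∀ ⦃a b : ℝ⦄, a < b → 0 < g a → g b < g a := by
    intro a b hab hpos
    obtain ⟨k, hk, hkpos⟩ : ∃ k ∈ Finset.univ, 0 < max (min (η + θ) (Δ k) - a) 0 := by
      by_contra h
      push_neg at h
      have : g a ≤ 0 := Finset.sum_nonpos (fun k hk => h k hk)
      linarith
    have hca : 0 < min (η + θ) (Δ k) - a := by
      rcases lt_or_ge 0 (min (η + θ) (Δ k) - a) with h | h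
      · exact h
      · rw [max_eq_right h] at hkpos; linarith
    refine Finset.sum_lt_sum (fun i _ => max_le_max (by linarith) le_rfl) ⟨k, hk, ?_⟩
    calc max (min (η + θ) (Δ k) - b) 0 < min (η + θ) (Δ k) - a :=
          max_lt (by linarith) hca
      _ ≤ max (min (η + θ) (Δ k) - a) 0 := le_max_left _ _
  have hcont : Continuous g := by
    apply continuous_finset_sum
    intro k _
    exact (continuous_const.sub continuous_id).max continuous_const
  have hzero : g (η + θ) = 0 := by
    apply Finset.sum_eq_zero
    intro k _
    exact max_eq_right (sub_nonpos.mpr (min_le_left _ _))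
  constructor
  · intro s hs hst
    show ∃! l : ℝ, 0 ≤ l ∧ g l ≤ s + η ∧ (0 < l → s + η = g l)
    rcases le_or_gt (g 0) (s + η) with h0 | h0
    · refine ⟨0, ⟨le_rfl, h0, fun h => absurd h (lt_irrefl 0)⟩, ?_⟩
      rintro y ⟨hy0, hyle, hyeq⟩
      rcases eq_or_lt_of_le hy0 with h | h
      · exact h.symm
      · exfalso
        have hgy : s + η = g y := hyeq h
        have h1 : g y ≤ g 0 := hmono hy0
        have h2 : g 0 = s + η := le_antisymm h0 (hgy ▸ h1)
        have := hstrict h (h2 ▸ hst)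
        linarith
    · -- g 0 > s + η > 0 = g (η + θ), IVT
      have hle : (0:ℝ) ≤ η + θ := by linarith
      have : s + η ∈ Set.Icc (g (η + θ)) (g 0) := ⟨hzero ▸ le_of_lt hst, le_of_lt h0⟩
      obtain ⟨l, hlmem, hgl⟩ := intermediate_value_Icc' hle hcont.continuousOn this
      have hl0 : 0 < l := by
        rcases eq_or_lt_of_le hlmem.1 with h | h
        · exfalso; rw [← h] at hgl; linarith
        · exact h
      refine ⟨l, ⟨le_of_lt hl0, le_of_eq hgl, fun _ => hgl.symm⟩, ?_⟩
      rintro y ⟨hy0, hyle, hyeq⟩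
      have hy0' : 0 < y := by
        rcases eq_or_lt_of_le hy0 with h | h
        · exfalso; rw [← h] at hyle; linarith
        · exact h
      have hgy : g y = s + η := (hyeq hy0').symm
      rcases lt_trichotomy y l with h | h | h
      · exfalso
        have := hstrict h (hgy ▸ hst)
        rw [hgy, hgl] at this; exact lt_irrefl _ this
      · exact h
      · exfalso
        have := hstrict h (hgl ▸ hst)
        rw [hgy, hgl] at this; exact lt_irrefl _ this
  · intro s s' l l' hs hss hst hl hl'
    obtain ⟨hl0, hlle, hleq⟩ := hl
    obtain ⟨hl'0, hl'le, hl'eq⟩ := hl'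
    by_contra h
    push_neg at h
    have hl'pos : 0 < l' := lt_of_le_of_lt hl0 h
    have hg' : s' + η = g l' := hl'eq hl'pos
    have h1 : g l' ≤ g l := hmono (le_of_lt h)
    have h2 : g l ≤ s + η := hlle
    have h3 : s + η ≤ s' + η := by linarith
    -- so g l = g l' = s + η = s' + η, with g l > 0
    have h4 : g l = g l' := le_antisymm (by linarith) h1
    have h5 : 0 < g l := by linarith
    have := hstrict h h5
    linarith
end

section
/- In the star network auction, a price vector for the winners satisfies every coalition core constraint and every individual rationality constraint if and only if it satisfies the reduced system of constraints. Precisely, for θ ≥ 0 and p = (p_0, (p_{j,k})_{j,k}) ∈ ℝ^{1+n_1+⋯+n_J}, the following are equivalent: (i) for every feasible coalition C of buyers, Σ_{i ∈ W∖C} p_i ≥ Σ_{i ∈ C∖W} β_i, and p_i ≤ β_i for every i ∈ W (where β_i denotes buyer i's bid); (ii) p_0 + Σ_{k=1}^{n_j} p_{j,k} ≥ C_j for all j ∈ {1,…,J}, b̲_{j,k} ≤ p_{j,k} ≤ b_{j,k} for all (j,k), and v_0 ≤ p_0 ≤ v_0 + θ. -/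
namespace StarSetting

variable (S : StarSetting)

/-- Buyers in the star network auction: `Sum.inl (Sum.inl i)` is the winning single-item
buyer for item `i`, `Sum.inl (Sum.inr i)` is the losing single-item buyer for item `i`,
and `Sum.inr j` is the package buyer for `S_j = {0, (j,1), …, (j,n_j)}`. -/
abbrev Buyer := (S.Idx ⊕ S.Idx) ⊕ Fin S.J

/-- The bundle of items desired by a buyer. -/
def bundle : S.Buyer → Finset S.Idx
  | .inl (.inl i) => {i}
  | .inl (.inr i) => {i}
  | .inr j => insert none (Finset.univ.image fun k : Fin (S.n j) => some ⟨j, k⟩)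

/-- The bid of each buyer, when buyer zero bids `v_0 + θ`. -/
noncomputable def bid (θ : ℝ) : S.Buyer → ℝ
  | .inl (.inl none) => S.v0 + θ
  | .inl (.inl (some jk)) => S.b jk.1 jk.2
  | .inl (.inr none) => S.bl0
  | .inl (.inr (some jk)) => S.bl jk.1 jk.2
  | .inr j => S.C j

/-- The set of winning buyers: one single-item buyer per item. -/
noncomputable def winners : Finset S.Buyer :=
  Finset.univ.image fun i : S.Idx => Sum.inl (Sum.inl i)

/-- A coalition of buyers is feasible if the bundles of its members are pairwise
disjoint. -/
def Feasible (T : Finset S.Buyer) : Prop :=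
  ∀ x ∈ T, ∀ y ∈ T, x ≠ y → Disjoint (S.bundle x) (S.bundle y)

/-- The price paid by each buyer, for a winner price vector `p` indexed by items. -/
noncomputable def buyerPrice (p : EuclideanSpace ℝ S.Idx) : S.Buyer → ℝ
  | .inl (.inl i) => p i
  | _ => 0

end StarSetting

namespace StarSetting

variable (S : StarSetting)

lemma mem_winners' {x : S.Buyer} : x ∈ S.winners ↔ ∃ i, x = Sum.inl (Sum.inl i) := by
  simp [winners, eq_comm]

lemma sum_bundle_package (p : S.Idx → ℝ) (j : Fin S.J) :
    ∑ i ∈ S.bundle (Sum.inr j), p i = p none + ∑ k, p (some ⟨j, k⟩) := by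
  rw [bundle, Finset.sum_insert (by simp),
    Finset.sum_image (by intro a _ b _ h; simpa using h)]

end StarSetting

/-- for nonnegative bids, a winner price vector satisfies all coalition
core constraints and individual rationality iff it satisfies the reduced system of
constraints defining the core region of the star network setting. -/
theorem star_core_constraints_iff (S : StarSetting)
    (hbl0 : 0 ≤ S.bl0) (hbl : ∀ j k, 0 ≤ S.bl j k) (hC : ∀ j, 0 ≤ S.C j)
    (θ : ℝ) (hθ : 0 ≤ θ) (p : EuclideanSpace ℝ S.Idx) :
    ((∀ T : Finset S.Buyer, S.Feasible T →
        ∑ x ∈ T \ S.winners, S.bid θ x ≤ ∑ x ∈ S.winners \ T, S.buyerPrice p x) ∧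
      (∀ x ∈ S.winners, S.buyerPrice p x ≤ S.bid θ x)) ↔
    ((∀ j, S.C j ≤ p none + ∑ k, p (some ⟨j, k⟩)) ∧
      (∀ j k, S.bl j k ≤ p (some ⟨j, k⟩) ∧ p (some ⟨j, k⟩) ≤ S.b j k) ∧
      S.v0 ≤ p none ∧ p none ≤ S.v0 + θ) := by
  constructor
  · rintro ⟨hcoal, hIR⟩
    -- individual rationality consequences
    have hIR0 : p none ≤ S.v0 + θ := by
      simpa [StarSetting.bid, StarSetting.buyerPrice] using
        hIR _ (S.mem_winners'.2 ⟨none, rfl⟩)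
    have hIRjk : ∀ j k, p (some ⟨j, k⟩) ≤ S.b j k := by
      intro j k
      simpa [StarSetting.bid, StarSetting.buyerPrice] using
        hIR _ (S.mem_winners'.2 ⟨some ⟨j, k⟩, rfl⟩)
    -- single-loser coalitions
    have hlo : ∀ i0 : S.Idx, S.bid θ (Sum.inl (Sum.inr i0)) ≤ p i0 := by
      intro i0
      set T : Finset S.Buyer :=
        insert (Sum.inl (Sum.inr i0))
          ((Finset.univ.erase i0).image fun i => Sum.inl (Sum.inl i)) with hTdef
      have hfeas : S.Feasible T := by
        intro x hx y hy hxy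
        simp only [hTdef, Finset.mem_insert, Finset.mem_image, Finset.mem_erase,
          Finset.mem_univ, and_true] at hx hy
        rcases hx with rfl | ⟨a, ha, rfl⟩ <;> rcases hy with rfl | ⟨c, hc, rfl⟩
        · exact absurd rfl hxy
        · simp only [StarSetting.bundle, Finset.disjoint_singleton]
          exact fun h => hc h.symm
        · simp only [StarSetting.bundle, Finset.disjoint_singleton]
          exact ha
        · simp only [StarSetting.bundle, Finset.disjoint_singleton]
          intro h; exact hxy (by rw [h])
      have h1 : T \ S.winners = {Sum.inl (Sum.inr i0)} := by
        ext x
        simp only [Finset.mem_sdiff, hTdef, Finset.mem_insert, Finset.mem_image,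
          Finset.mem_erase, Finset.mem_univ, and_true, Finset.mem_singleton,
          S.mem_winners']
        constructor
        · rintro ⟨rfl | ⟨a, _, rfl⟩, hx⟩
          · rfl
          · exact absurd ⟨a, rfl⟩ hx
        · rintro rfl
          exact ⟨Or.inl rfl, by rintro ⟨i, h⟩; simp at h⟩
      have h2 : S.winners \ T = {Sum.inl (Sum.inl i0)} := by
        ext x
        simp only [Finset.mem_sdiff, hTdef, Finset.mem_insert, Finset.mem_image,
          Finset.mem_erase, Finset.mem_univ, and_true, Finset.mem_singleton,
          S.mem_winners']
        constructor
        · rintro ⟨⟨i, rfl⟩, hx⟩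
          push_neg at hx
          obtain ⟨-, hx2⟩ := hx
          by_cases hii : i = i0
          · rw [hii]
          · exact absurd rfl (hx2 i hii)
        · rintro rfl
          refine ⟨⟨i0, rfl⟩, ?_⟩
          push_neg
          exact ⟨by simp, fun i hi h => hi (by simpa using h)⟩
      have := hcoal T hfeas
      rw [h1, h2, Finset.sum_singleton, Finset.sum_singleton] at this
      exact this
    have hbl0p : S.bl0 ≤ p none := by simpa [StarSetting.bid] using hlo none
    have hbljk : ∀ j k, S.bl j k ≤ p (some ⟨j, k⟩) := by
      intro j k; simpa [StarSetting.bid] using hlo (some ⟨j, k⟩)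
    -- package coalitions
    have hpk : ∀ j, S.C j ≤ p none + ∑ k, p (some ⟨j, k⟩) := by
      intro j
      set T : Finset S.Buyer :=
        insert (Sum.inr j)
          ((Finset.univ \ S.bundle (Sum.inr j)).image fun i => Sum.inl (Sum.inl i))
          with hTdef
      have hfeas : S.Feasible T := by
        intro x hx y hy hxy
        simp only [hTdef, Finset.mem_insert, Finset.mem_image, Finset.mem_sdiff,
          Finset.mem_univ, true_and] at hx hy
        rcases hx with rfl | ⟨a, ha, rfl⟩ <;> rcases hy with rfl | ⟨c, hc, rfl⟩
        · exact absurd rfl hxy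
        · exact Finset.disjoint_singleton_right.mpr hc
        · exact Finset.disjoint_singleton_left.mpr ha
        · simp only [StarSetting.bundle, Finset.disjoint_singleton]
          intro h; exact hxy (by rw [h])
      have h1 : T \ S.winners = {Sum.inr j} := by
        ext x
        simp only [Finset.mem_sdiff, hTdef, Finset.mem_insert, Finset.mem_image,
          Finset.mem_sdiff, Finset.mem_univ, true_and, Finset.mem_singleton,
          S.mem_winners']
        constructor
        · rintro ⟨rfl | ⟨a, _, rfl⟩, hx⟩
          · rfl
          · exact absurd ⟨a, rfl⟩ hx
        · rintro rfl
          exact ⟨Or.inl rfl, by rintro ⟨i, h⟩; simp at h⟩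
      have h2 : S.winners \ T =
          (S.bundle (Sum.inr j)).image fun i => Sum.inl (Sum.inl i) := by
        ext x
        simp only [Finset.mem_sdiff, hTdef, Finset.mem_insert, Finset.mem_image,
          Finset.mem_sdiff, Finset.mem_univ, true_and, S.mem_winners']
        constructor
        · rintro ⟨⟨i, rfl⟩, hx⟩
          push_neg at hx
          obtain ⟨-, hx2⟩ := hx
          refine ⟨i, ?_, rfl⟩
          by_contra hi
          exact absurd rfl (hx2 i hi)
        · rintro ⟨i, hi, rfl⟩
          refine ⟨⟨i, rfl⟩, ?_⟩
          push_neg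
          refine ⟨by simp, fun a ha h => ha ?_⟩
          have hai : a = i := by simpa using h
          rwa [hai]
      have := hcoal T hfeas
      rw [h1, h2, Finset.sum_singleton,
        Finset.sum_image (by intro a _ b _ h; simpa using h)] at this
      have heq : ∑ i ∈ S.bundle (Sum.inr j), S.buyerPrice p (Sum.inl (Sum.inl i)) =
          p none + ∑ k, p (some ⟨j, k⟩) := S.sum_bundle_package p j
      rw [heq] at this
      simpa [StarSetting.bid] using this
    refine ⟨hpk, fun j k => ⟨hbljk j k, hIRjk j k⟩, ?_, hIR0⟩
    refine max_le hbl0p (Finset.sup'_le _ _ fun j _ => ?_)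
    have hs : ∑ k, p (some ⟨j, k⟩) ≤ ∑ k, S.b j k :=
      Finset.sum_le_sum fun k _ => hIRjk j k
    have := hpk j
    linarith
  · rintro ⟨hc, hb, hv0, hvθ⟩
    classical
    have hpnonneg : ∀ i : S.Idx, 0 ≤ p i := by
      rintro (_ | ⟨j, k⟩)
      · exact le_trans (le_trans hbl0 (le_max_left _ _)) hv0
      · exact le_trans (hbl j k) (hb j k).1
    constructor
    · intro T hT
      set U : Finset S.Idx := Finset.univ.filter (fun i => Sum.inl (Sum.inl i) ∉ T)
        with hU
      have hWT : S.winners \ T = U.image fun i => Sum.inl (Sum.inl i) := by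
        ext x
        simp only [Finset.mem_sdiff, S.mem_winners', Finset.mem_image, hU,
          Finset.mem_filter, Finset.mem_univ, true_and]
        constructor
        · rintro ⟨⟨i, rfl⟩, hx⟩; exact ⟨i, hx, rfl⟩
        · rintro ⟨i, hx, rfl⟩; exact ⟨⟨i, rfl⟩, hx⟩
      have hsumW : ∑ x ∈ S.winners \ T, S.buyerPrice p x = ∑ i ∈ U, p i := by
        rw [hWT, Finset.sum_image (by intro a _ b _ h; simpa using h)]
        rfl
      have hbsub : ∀ x ∈ T \ S.winners, S.bundle x ⊆ U := by
        intro x hx i hi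
        obtain ⟨hxT, hxW⟩ := Finset.mem_sdiff.mp hx
        simp only [hU, Finset.mem_filter, Finset.mem_univ, true_and]
        intro hwin
        have hne : x ≠ Sum.inl (Sum.inl i) := by
          rintro rfl; exact hxW (S.mem_winners'.2 ⟨i, rfl⟩)
        have hd := hT x hxT _ hwin hne
        have h2 : i ∈ S.bundle (Sum.inl (Sum.inl i)) := by
          simp [StarSetting.bundle]
        exact Finset.disjoint_left.mp hd hi h2
      have hdisj : ((T \ S.winners : Finset S.Buyer) : Set S.Buyer).PairwiseDisjoint
          S.bundle := by
        intro x hx y hy hxy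
        exact hT x (Finset.mem_sdiff.mp hx).1 y (Finset.mem_sdiff.mp hy).1 hxy
      have key : ∑ x ∈ T \ S.winners, S.bid θ x ≤
          ∑ x ∈ T \ S.winners, ∑ i ∈ S.bundle x, p i := by
        apply Finset.sum_le_sum
        intro x hx
        obtain ⟨hxT, hxW⟩ := Finset.mem_sdiff.mp hx
        rcases x with (i | i) | j
        · exact absurd (S.mem_winners'.2 ⟨i, rfl⟩) hxW
        · rcases i with _ | ⟨j, k⟩
          · have : S.bl0 ≤ p none := le_trans (le_max_left _ _) hv0
            simpa [StarSetting.bid, StarSetting.bundle] using this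
          · simpa [StarSetting.bid, StarSetting.bundle] using (hb j k).1
        · have := hc j
          rw [← S.sum_bundle_package p j] at this
          simpa [StarSetting.bid] using this
      have hbiU : ∑ x ∈ T \ S.winners, ∑ i ∈ S.bundle x, p i =
          ∑ i ∈ (T \ S.winners).biUnion S.bundle, p i :=
        (Finset.sum_biUnion hdisj).symm
      have hsub : (T \ S.winners).biUnion S.bundle ⊆ U :=
        Finset.biUnion_subset.mpr hbsub
      calc ∑ x ∈ T \ S.winners, S.bid θ x
          ≤ ∑ i ∈ (T \ S.winners).biUnion S.bundle, p i := by rw [← hbiU]; exact key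
        _ ≤ ∑ i ∈ U, p i :=
            Finset.sum_le_sum_of_subset_of_nonneg hsub fun i _ _ => hpnonneg i
        _ = ∑ x ∈ S.winners \ T, S.buyerPrice p x := hsumW.symm
    · intro x hx
      obtain ⟨i, rfl⟩ := S.mem_winners'.mp hx
      rcases i with _ | ⟨j, k⟩
      · simpa [StarSetting.bid, StarSetting.buyerPrice] using hvθ
      · simpa [StarSetting.bid, StarSetting.buyerPrice] using (hb j k).2
end

section
/- For every integer w ≥ 2 and every real δ with 0 < δ ≤ 1/(w−1), any core-selecting payment rule for the market with w single-item buyers and one package buyer bidding w admits a deviation scenario with marginal incentive to deviate at least 1 − 1/w. Precisely: let P be any function assigning to each bid vector b ∈ ℝ^w with b_i ≥ 0 for all i and Σ_{i=1}^w b_i ≥ w a price vector P(b) ∈ ℝ^w satisfying the core conditions 0 ≤ P_i(b) ≤ b_i for all i and Σ_{i=1}^w P_i(b) ≥ w. Then there exist an index i* ∈ {1,…,w} and bid vectors b¹, b² ∈ ℝ^w with b¹_i = b²_i = 1 + δ for all i ≠ i*, b¹_{i*} = 1 − (w−1)δ, and b²_{i*} = 1 + δ (so b²_{i*} − b¹_{i*}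 = wδ), both satisfying the domain conditions, such that P_{i*}(b²) − P_{i*}(b¹) ≥ (w−1)δ = (1 − 1/w)·(b²_{i*} − b¹_{i*}). -/
/-- for any core-selecting payment rule `P` for the market with `w`
single-item buyers facing a package buyer bidding `w`, there is a deviation scenario
with marginal incentive to deviate at least `1 − 1/w`. -/
theorem core_selecting_worst_case_mid (w : ℕ) (hw : 2 ≤ w)
    (δ : ℝ) (hδ0 : 0 < δ) (hδ1 : δ ≤ 1 / ((w : ℝ) - 1))
    (P : (Fin w → ℝ) → (Fin w → ℝ))
    (hP : ∀ bv : Fin w → ℝ, (∀ i, 0 ≤ bv i) → (w : ℝ) ≤ ∑ i, bv i →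
      (∀ i, 0 ≤ P bv i ∧ P bv i ≤ bv i) ∧ (w : ℝ) ≤ ∑ i, P bv i) :
    ∃ (istar : Fin w) (b1 b2 : Fin w → ℝ),
      (∀ i, i ≠ istar → b1 i = 1 + δ ∧ b2 i = 1 + δ) ∧
      b1 istar = 1 - ((w : ℝ) - 1) * δ ∧ b2 istar = 1 + δ ∧
      (∀ i, 0 ≤ b1 i) ∧ (w : ℝ) ≤ ∑ i, b1 i ∧
      (∀ i, 0 ≤ b2 i) ∧ (w : ℝ) ≤ ∑ i, b2 i ∧
      ((w : ℝ) - 1) * δ ≤ P b2 istar - P b1 istar := by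
  have hw1 : (1 : ℝ) ≤ (w : ℝ) - 1 := by
    have : (2 : ℝ) ≤ (w : ℝ) := by exact_mod_cast hw
    linarith
  have hwpos : (0 : ℝ) < (w : ℝ) - 1 := by linarith
  have hδw : ((w : ℝ) - 1) * δ ≤ 1 := by
    rw [le_div_iff₀ hwpos] at hδ1
    linarith [hδ1]
  -- b2 : all coordinates 1 + δ
  set b2 : Fin w → ℝ := fun _ => 1 + δ with hb2def
  have hb2nn : ∀ i, 0 ≤ b2 i := fun i => by simp [hb2def]; linarith
  have hcard : (Finset.univ : Finset (Fin w)).card = w := by simp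
  have hsum2 : ∑ i, b2 i = (w : ℝ) * (1 + δ) := by
    simp [hb2def, Finset.sum_const, hcard]; ring
  have hwR0 : (0 : ℝ) < (w : ℝ) := by linarith
  have hb2sum : (w : ℝ) ≤ ∑ i, b2 i := by
    rw [hsum2]; nlinarith
  obtain ⟨hP2ir, hP2core⟩ := hP b2 hb2nn hb2sum
  -- find istar with 1 ≤ P b2 istar
  have : Nonempty (Fin w) := ⟨⟨0, by omega⟩⟩
  have hne : (Finset.univ : Finset (Fin w)).Nonempty := Finset.univ_nonempty
  obtain ⟨istar, _, hist⟩ : ∃ i ∈ Finset.univ, (1 : ℝ) ≤ P b2 i := by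
    by_contra h
    push_neg at h
    have : ∑ i, P b2 i < ∑ _i : Fin w, (1 : ℝ) :=
      Finset.sum_lt_sum_of_nonempty hne (fun i _ => h i (Finset.mem_univ i))
    simp [hcard] at this
    linarith
  -- b1
  set b1 : Fin w → ℝ := fun i => if i = istar then 1 - ((w : ℝ) - 1) * δ else 1 + δ
    with hb1def
  have hb1nn : ∀ i, 0 ≤ b1 i := by
    intro i
    simp only [hb1def]
    split <;> linarith
  have hb1alt : ∀ i, b1 i = (1 + δ) + (if i = istar then -((w : ℝ) * δ) else 0) := by
    intro i
    simp only [hb1def]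
    split <;> ring
  have hsum1 : ∑ i, b1 i = (w : ℝ) := by
    simp only [hb1alt]
    rw [Finset.sum_add_distrib, Finset.sum_const, hcard,
      Finset.sum_ite_eq' Finset.univ istar (fun _ => -((w : ℝ) * δ))]
    simp
  obtain ⟨hP1ir, hP1core⟩ := hP b1 hb1nn (le_of_eq hsum1.symm)
  -- P b1 = b1 pointwise at istar
  have hzero : ∑ i, (b1 i - P b1 i) ≤ 0 := by
    rw [Finset.sum_sub_distrib, hsum1]; linarith
  have hnn : ∀ i ∈ Finset.univ, 0 ≤ b1 i - P b1 i :=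
    fun i _ => sub_nonneg.mpr (hP1ir i).2
  have heq : ∀ i ∈ Finset.univ, b1 i - P b1 i = 0 := by
    have hsz : ∑ i, (b1 i - P b1 i) = 0 :=
      le_antisymm hzero (Finset.sum_nonneg hnn)
    exact (Finset.sum_eq_zero_iff_of_nonneg hnn).mp hsz
  have hP1 : P b1 istar = 1 - ((w : ℝ) - 1) * δ := by
    have := heq istar (Finset.mem_univ istar)
    have hb1i : b1 istar = 1 - ((w : ℝ) - 1) * δ := by simp [hb1def]
    linarith
  refine ⟨istar, b1, b2, ?_, by simp [hb1def], rfl, hb1nn, le_of_eq hsum1.symm,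
    hb2nn, hb2sum, ?_⟩
  · intro i hi; exact ⟨by simp [hb1def, hi], rfl⟩
  · rw [hP1]; linarith
end
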